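/- arXiv:2302.12543 — 10 statements merged into one kernel-verified Lean document; each statement's English description precedes it below -/
import Mathlib

section
/- Let d ≥ 1 and let Γ : ℝ^d × ℝ^d → ℝ^d be a bilinear map with coefficients Γ^i_{jk} defined by Γ(e_j, e_k) = Σ_i Γ^i_{jk} e_i, where (e_1,…,e_d) is the canonical basis of ℝ^d. The following are equivalent: (1) for every v ∈ ℝ^d, Γ(v,v) is a scalar multiple of v; (2) for all i ≠ j one has Γ^i_{ii} = Γ^j_{ij} + Γ^j_{ji}, and for all i, j and every k ∉ {i,j} one has Γ^k_{ij} + Γ^k_{ji} = 0. Moreover, when these conditions hold, Γ(v,v) = (Σ_i Γ^i_{ii} v_i) · v for every v ∈ ℝ^d. -/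
private lemma stmt0_back {d : ℕ} (Γ : (Fin d → ℝ) →ₗ[ℝ] (Fin d → ℝ) →ₗ[ℝ] (Fin d → ℝ))
    (h1 : ∀ i j : Fin d, i ≠ j → Γ (Pi.single i 1) (Pi.single i 1) i =
        Γ (Pi.single i 1) (Pi.single j 1) j + Γ (Pi.single j 1) (Pi.single i 1) j)
    (h2 : ∀ i j k : Fin d, k ≠ i → k ≠ j →
        Γ (Pi.single i 1) (Pi.single j 1) k + Γ (Pi.single j 1) (Pi.single i 1) k = 0)
    (v : Fin d → ℝ) :
    Γ v v = (∑ i, Γ (Pi.single i 1) (Pi.single i 1) i * v i) • v := by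
  have hv : v = ∑ i, v i • (Pi.single i (1:ℝ) : Fin d → ℝ) := by
    ext k
    simp [Pi.single_apply]
  funext k
  have key : (Γ v v) k = ∑ i, ∑ j, v i * v j *
      Γ (Pi.single i 1) (Pi.single j 1) k := by
    conv_lhs => rw [hv]
    simp only [map_sum, map_smul, LinearMap.sum_apply, LinearMap.smul_apply,
      Finset.sum_apply, Pi.smul_apply, smul_eq_mul, Finset.mul_sum]
    rw [Finset.sum_comm]
    exact Finset.sum_congr rfl fun i _ => Finset.sum_congr rfl fun j _ => by ring
  have hH : ∀ i j : Fin d,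
      Γ (Pi.single i 1) (Pi.single j 1) k + Γ (Pi.single j 1) (Pi.single i 1) k
      = (if k = i then Γ (Pi.single j 1) (Pi.single j 1) j else 0)
        + (if k = j then Γ (Pi.single i 1) (Pi.single i 1) i else 0) := by
    intro i j
    rcases eq_or_ne k i with rfl | hki
    · rcases eq_or_ne k j with rfl | hkj
      · simp
      · rw [if_pos rfl, if_neg hkj, add_zero]
        linarith [h1 j k (Ne.symm hkj)]
    · rcases eq_or_ne k j with rfl | hkj
      · rw [if_neg hki, if_pos rfl, zero_add]
        linarith [h1 i k (Ne.symm hki)]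
      · simp only [if_neg hki, if_neg hkj, add_zero]
        exact h2 i j k hki hkj
  have swap : ∑ i, ∑ j, v i * v j * Γ (Pi.single i 1) (Pi.single j 1) k
      = ∑ i, ∑ j, v i * v j * Γ (Pi.single j 1) (Pi.single i 1) k := by
    rw [Finset.sum_comm]
    exact Finset.sum_congr rfl fun i _ => Finset.sum_congr rfl fun j _ => by ring
  have two : 2 * (∑ i, ∑ j, v i * v j * Γ (Pi.single i 1) (Pi.single j 1) k)
      = ∑ i : Fin d, ∑ j : Fin d, v i * v j *
        ((if k = i then Γ (Pi.single j 1) (Pi.single j 1) j else 0)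
          + (if k = j then Γ (Pi.single i 1) (Pi.single i 1) i else 0)) := by
    have e1 : 2 * (∑ i, ∑ j, v i * v j * Γ (Pi.single i 1) (Pi.single j 1) k)
        = (∑ i, ∑ j, v i * v j * Γ (Pi.single i 1) (Pi.single j 1) k)
          + ∑ i, ∑ j, v i * v j * Γ (Pi.single j 1) (Pi.single i 1) k := by
      rw [← swap]; ring
    rw [e1, ← Finset.sum_add_distrib]
    refine Finset.sum_congr rfl fun i _ => ?_
    rw [← Finset.sum_add_distrib]
    refine Finset.sum_congr rfl fun j _ => ?_
    rw [← mul_add, hH i j]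
  have rhs : (∑ i : Fin d, ∑ j : Fin d, v i * v j *
        ((if k = i then Γ (Pi.single j 1) (Pi.single j 1) j else 0)
          + (if k = j then Γ (Pi.single i 1) (Pi.single i 1) i else 0)))
      = 2 * ((∑ i, Γ (Pi.single i 1) (Pi.single i 1) i * v i) * v k) := by
    have A : ∀ (f : Fin d → Fin d → ℝ),
        (∑ i : Fin d, ∑ j : Fin d, if k = i then f i j else 0) = ∑ j : Fin d, f k j := by
      intro f
      rw [Finset.sum_comm]
      simp [Finset.sum_ite_eq]
    simp only [mul_add, mul_ite, mul_zero, Finset.sum_add_distrib,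
      Finset.sum_ite_eq, Finset.mem_univ, if_true]
    rw [A fun i j => v i * v j * Γ (Pi.single j 1) (Pi.single j 1) j]
    have s1 : ∑ j : Fin d, v k * v j * Γ (Pi.single j 1) (Pi.single j 1) j
        = (∑ i, Γ (Pi.single i 1) (Pi.single i 1) i * v i) * v k := by
      rw [Finset.sum_mul]
      exact Finset.sum_congr rfl fun j _ => by ring
    have s2 : ∑ i : Fin d, v i * v k * Γ (Pi.single i 1) (Pi.single i 1) i
        = (∑ i, Γ (Pi.single i 1) (Pi.single i 1) i * v i) * v k := by
      rw [Finset.sum_mul]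
      exact Finset.sum_congr rfl fun j _ => by ring
    rw [s1, s2]
    ring
  have : (Γ v v) k = (∑ i, Γ (Pi.single i 1) (Pi.single i 1) i * v i) * v k := by
    rw [key]; linarith [two, rhs]
  simpa using this


private lemma stmt0_fwd {d : ℕ} (Γ : (Fin d → ℝ) →ₗ[ℝ] (Fin d → ℝ) →ₗ[ℝ] (Fin d → ℝ))
    (h : ∀ v : Fin d → ℝ, ∃ c : ℝ, Γ v v = c • v) :
    (∀ i j : Fin d, i ≠ j →
        Γ (Pi.single i 1) (Pi.single i 1) i =
          Γ (Pi.single i 1) (Pi.single j 1) j + Γ (Pi.single j 1) (Pi.single i 1) j) ∧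
      (∀ i j k : Fin d, k ≠ i → k ≠ j →
        Γ (Pi.single i 1) (Pi.single j 1) k + Γ (Pi.single j 1) (Pi.single i 1) k = 0) := by
  have diag : ∀ i k : Fin d, k ≠ i → Γ (Pi.single i 1) (Pi.single i 1) k = 0 := by
    intro i k hk
    obtain ⟨c, hc⟩ := h (Pi.single i 1)
    have hk' := congrFun hc k
    simpa [Pi.single_eq_of_ne hk] using hk'
  constructor
  · intro i j hij
    obtain ⟨c, hc⟩ := h (Pi.single i 1 + Pi.single j 1)
    obtain ⟨c', hc'⟩ := h (Pi.single i 1 - Pi.single j 1)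
    have h1i := congrFun hc i
    have h1j := congrFun hc j
    have h2i := congrFun hc' i
    have h2j := congrFun hc' j
    simp only [map_add, map_sub, LinearMap.add_apply, LinearMap.sub_apply,
      Pi.add_apply, Pi.sub_apply, Pi.smul_apply, smul_eq_mul,
      Pi.single_eq_same, Pi.single_eq_of_ne hij, Pi.single_eq_of_ne hij.symm]
      at h1i h1j h2i h2j
    have dij := diag i j hij.symm
    have dji := diag j i hij
    linarith
  · intro i j k hki hkj
    obtain ⟨c, hc⟩ := h (Pi.single i 1 + Pi.single j 1)
    have hk' := congrFun hc k
    simp only [map_add, LinearMap.add_apply, Pi.add_apply, Pi.smul_apply, smul_eq_mul,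
      Pi.single_eq_of_ne hki, Pi.single_eq_of_ne hkj] at hk'
    have d1 := diag i k hki
    have d2 := diag j k hkj
    linarith

/-- Characterization of bilinear maps `Γ` on `ℝ^d` such that `Γ(v,v)` is always
colinear to `v` (i.e., whose geodesics are straight lines in the chart), in terms of
the Christoffel symbols `Γ^i_{jk} = (Γ e_j e_k) i`, together with the explicit formula
`Γ(v,v) = (Σ_i Γ^i_{ii} v_i) • v` when these conditions hold. -/
theorem stmt0 (d : ℕ) (hd : 1 ≤ d)
    (Γ : (Fin d → ℝ) →ₗ[ℝ] (Fin d → ℝ) →ₗ[ℝ] (Fin d → ℝ)) :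
    ((∀ v : Fin d → ℝ, ∃ c : ℝ, Γ v v = c • v) ↔
      ((∀ i j : Fin d, i ≠ j →
          Γ (Pi.single i 1) (Pi.single i 1) i =
            Γ (Pi.single i 1) (Pi.single j 1) j + Γ (Pi.single j 1) (Pi.single i 1) j) ∧
        (∀ i j k : Fin d, k ≠ i → k ≠ j →
          Γ (Pi.single i 1) (Pi.single j 1) k + Γ (Pi.single j 1) (Pi.single i 1) k = 0))) ∧
    ((∀ v : Fin d → ℝ, ∃ c : ℝ, Γ v v = c • v) →
      ∀ v : Fin d → ℝ,
        Γ v v = (∑ i, Γ (Pi.single i 1) (Pi.single i 1) i * v i) • v) := by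
  refine ⟨⟨stmt0_fwd Γ, fun hc v => ⟨_, stmt0_back Γ hc.1 hc.2 v⟩⟩, fun h v => ?_⟩
  obtain ⟨h1, h2⟩ := stmt0_fwd Γ h
  exact stmt0_back Γ h1 h2 v
end

section
/- Let d ≥ 1 and let Γ : ℝ^d × ℝ^d → ℝ^d be a symmetric bilinear map (Γ(u,v) = Γ(v,u) for all u,v). The following are equivalent: (1) for every v ∈ ℝ^d, Γ(v,v) is a scalar multiple of v; (2) there exists a linear form a on ℝ^d such that Γ(u,v) = a(v)·u + a(u)·v for all u,v. Moreover, in that case the linear form a is unique and its coefficients satisfy a_i = Γ^i_{ii}/2, equivalently Γ^k_{ij} = δ_{ik} a_j + δ_{jk} a_i for all i,j,k, where δ is the Kronecker symbol. -/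
section aux

variable {d : ℕ}

private noncomputable def stmtA (Γ : (Fin d → ℝ) →ₗ[ℝ] (Fin d → ℝ) →ₗ[ℝ] (Fin d → ℝ)) :
    (Fin d → ℝ) →ₗ[ℝ] ℝ :=
  ∑ i : Fin d, (Γ (Pi.single i 1) (Pi.single i 1) i / 2) • LinearMap.proj i

private lemma stmtA_single (Γ : (Fin d → ℝ) →ₗ[ℝ] (Fin d → ℝ) →ₗ[ℝ] (Fin d → ℝ)) (j : Fin d) :
    stmtA Γ (Pi.single j 1) = Γ (Pi.single j 1) (Pi.single j 1) j / 2 := by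
  simp only [stmtA, LinearMap.sum_apply, LinearMap.smul_apply, LinearMap.proj_apply,
    smul_eq_mul, Pi.single_apply, mul_ite, mul_one, mul_zero]
  rw [Finset.sum_ite_eq' Finset.univ j]
  simp

private lemma stmt_key (Γ : (Fin d → ℝ) →ₗ[ℝ] (Fin d → ℝ) →ₗ[ℝ] (Fin d → ℝ))
    (hsym : ∀ u v : Fin d → ℝ, Γ u v = Γ v u)
    (h1 : ∀ v : Fin d → ℝ, ∃ c : ℝ, Γ v v = c • v) (i j k : Fin d) :
    Γ (Pi.single i 1) (Pi.single j 1) k =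
      (if i = k then Γ (Pi.single j 1) (Pi.single j 1) j / 2 else 0) +
        (if j = k then Γ (Pi.single i 1) (Pi.single i 1) i / 2 else 0) := by
  classical
  set e : Fin d → (Fin d → ℝ) := fun i => Pi.single i 1 with he
  obtain ⟨ci, hci⟩ := h1 (e i)
  obtain ⟨cj, hcj⟩ := h1 (e j)
  have Fi : ∀ m, Γ (e i) (e i) m = ci * (e i m) := fun m => by
    simpa using congrFun hci m
  have Fj : ∀ m, Γ (e j) (e j) m = cj * (e j m) := fun m => by
    simpa using congrFun hcj m
  have hii : Γ (e i) (e i) i = ci := by simpa [he] using Fi i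
  have hjj : Γ (e j) (e j) j = cj := by simpa [he] using Fj j
  by_cases hij : i = j
  · subst hij
    by_cases hik : i = k
    · subst hik
      simp only [eq_self_iff_true, if_true]
      ring
    · simp only [if_neg hik]
      have := Fi k
      simp [he, Pi.single_eq_of_ne (Ne.symm hik)] at this
      simpa using this
  · -- i ≠ j
    obtain ⟨c1, hc1⟩ := h1 (e i + e j)
    obtain ⟨c2, hc2⟩ := h1 (e i + (2:ℝ) • e j)
    have E1 : ∀ m, Γ (e i) (e i) m + 2 * Γ (e i) (e j) m + Γ (e j) (e j) m
        = c1 * (e i m + e j m) := by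
      intro m
      have := congrFun hc1 m
      simp only [map_add, LinearMap.add_apply, Pi.add_apply, Pi.smul_apply,
        smul_eq_mul, hsym (e j) (e i)] at this
      linarith [this]
    have E2 : ∀ m, Γ (e i) (e i) m + 4 * Γ (e i) (e j) m + 4 * Γ (e j) (e j) m
        = c2 * (e i m + 2 * e j m) := by
      intro m
      have := congrFun hc2 m
      simp only [map_add, map_smul, LinearMap.add_apply, LinearMap.smul_apply,
        Pi.add_apply, Pi.smul_apply, smul_eq_mul, hsym (e j) (e i)] at this
      linarith [this]
    have eii : e i i = 1 := by simp [he]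
    have ejj : e j j = 1 := by simp [he]
    have eij : e i j = 0 := by simp [he, Pi.single_eq_of_ne (Ne.symm hij)]
    have eji : e j i = 0 := by simp [he, Pi.single_eq_of_ne hij]
    have A1 := E1 i; have A2 := E2 i; have B1 := E1 j; have B2 := E2 j
    rw [eii, eji, Fi i, Fj i, eii, eji] at A1 A2
    rw [eij, ejj, Fi j, Fj j, eij, ejj] at B1 B2
    -- A1 : ci*1 + 2*Γij i + cj*0 = c1*(1+0), etc.
    have hGi : Γ (e i) (e j) i = cj / 2 := by linarith
    have hGj : Γ (e i) (e j) j = ci / 2 := by linarith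
    by_cases hik : i = k
    · subst hik
      simp [if_neg (fun h : j = i => hij h.symm), hGi, hjj]
      exact hGi.trans (congrArg (· / 2) hjj).symm
    · by_cases hjk : j = k
      · subst hjk
        simp [if_neg hik, hGj, hii]
        exact hGj.trans (congrArg (· / 2) hii).symm
      · simp only [if_neg hik, if_neg hjk, add_zero]
        have C1 := E1 k
        rw [Fi k, Fj k] at C1
        have eik : e i k = 0 := by simp [he, Pi.single_eq_of_ne (Ne.symm hik)]
        have ejk : e j k = 0 := by simp [he, Pi.single_eq_of_ne (Ne.symm hjk)]
        rw [eik, ejk] at C1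
        linarith

end aux

/-- For a symmetric bilinear map `Γ` on `ℝ^d`, the condition that `Γ(v,v)` is always
colinear to `v` is equivalent to the existence of a linear form `a` with
`Γ(u,v) = a(v)•u + a(u)•v`; moreover such an `a` is unique, with
`a_i = Γ^i_{ii}/2`, equivalently `Γ^k_{ij} = δ_{ik} a_j + δ_{jk} a_i`. -/
theorem stmt1 (d : ℕ) (hd : 1 ≤ d)
    (Γ : (Fin d → ℝ) →ₗ[ℝ] (Fin d → ℝ) →ₗ[ℝ] (Fin d → ℝ))
    (hsym : ∀ u v : Fin d → ℝ, Γ u v = Γ v u) :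
    ((∀ v : Fin d → ℝ, ∃ c : ℝ, Γ v v = c • v) ↔
      (∃ a : (Fin d → ℝ) →ₗ[ℝ] ℝ, ∀ u v : Fin d → ℝ, Γ u v = a v • u + a u • v)) ∧
    (∀ a : (Fin d → ℝ) →ₗ[ℝ] ℝ, (∀ u v : Fin d → ℝ, Γ u v = a v • u + a u • v) →
      (∀ a' : (Fin d → ℝ) →ₗ[ℝ] ℝ, (∀ u v : Fin d → ℝ, Γ u v = a' v • u + a' u • v) →
        a' = a) ∧
      (∀ i : Fin d,
        a (Pi.single i 1) = Γ (Pi.single i 1) (Pi.single i 1) i / 2) ∧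
      (∀ i j k : Fin d,
        Γ (Pi.single i 1) (Pi.single j 1) k =
          (if i = k then a (Pi.single j 1) else 0) +
            (if j = k then a (Pi.single i 1) else 0))) := by
  classical
  constructor
  · constructor
    · intro h1
      refine ⟨stmtA Γ, ?_⟩
      -- both sides are bilinear; compare on the basis
      set a := stmtA Γ with ha
      let B : (Fin d → ℝ) →ₗ[ℝ] (Fin d → ℝ) →ₗ[ℝ] (Fin d → ℝ) :=
        LinearMap.mk₂ ℝ (fun u v => a v • u + a u • v)
          (fun u₁ u₂ v => by simp [add_smul, smul_add]; try abel)
          (fun c u v => by simp [smul_smul, smul_add, mul_comm]; try abel)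
          (fun u v₁ v₂ => by simp [add_smul, smul_add]; try abel)
          (fun c u v => by simp [smul_smul, smul_add, mul_comm]; try abel)
      have hΓB : Γ = B := by
        apply (Pi.basisFun ℝ (Fin d)).ext
        intro i
        apply (Pi.basisFun ℝ (Fin d)).ext
        intro j
        funext k
        have hb : ∀ m : Fin d, (Pi.basisFun ℝ (Fin d)) m = Pi.single m (1:ℝ) := by
          intro m; simp [Pi.basisFun_apply]
        rw [hb, hb]
        have hk := stmt_key Γ hsym h1 i j k
        have hA1 := stmtA_single Γ i
        have hA2 := stmtA_single Γ j
        simp only [B, LinearMap.mk₂_apply, Pi.add_apply, Pi.smul_apply, smul_eq_mul,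
          Pi.single_apply]
        rw [hk, ha, hA1, hA2]
        by_cases hik : i = k <;> by_cases hjk : j = k <;>
          simp [hik, hjk, eq_comm] <;> ring
      intro u v
      rw [hΓB]
      simp [B]
    · rintro ⟨a, ha⟩ v
      exact ⟨2 * a v, by rw [ha v v]; module⟩
  · intro a ha
    refine ⟨?_, ?_, ?_⟩
    · intro a' ha'
      apply LinearMap.ext
      intro v
      rcases eq_or_ne v 0 with rfl | hv
      · simp
      · have h := (ha v v).symm.trans (ha' v v)
        have h2 : ((a' v + a' v) - (a v + a v)) • v = 0 := by
          rw [sub_smul, add_smul, add_smul, ← h]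
          abel
        rcases smul_eq_zero.mp h2 with h3 | h3
        · linarith [h3]
        · exact absurd h3 hv
    · intro i
      have h := congrFun (ha (Pi.single i 1) (Pi.single i 1)) i
      simp [Pi.single_eq_same] at h
      rw [h]; ring
    · intro i j k
      have h := congrFun (ha (Pi.single i 1) (Pi.single j 1)) k
      simp only [Pi.add_apply, Pi.smul_apply, smul_eq_mul, Pi.single_apply] at h
      rw [h]
      by_cases hik : i = k <;> by_cases hjk : j = k <;>
        simp [hik, hjk, eq_comm]
end

section
/- Let U ⊆ ℝ^d be open (d ≥ 2), let a_1,…,a_d : U → ℝ be smooth, and write a{x}(u) = Σ_i a_i(x) u_i. Let F be an affine subspace of ℝ^d with direction subspace F⃗, let γ : I → U ∩ F be a C¹ curve contained in F, and let v : I → ℝ^d be a differentiable solution of the parallel-transport equation v'(t) = −( a{γ(t)}(γ'(t))·v(t) + a{γ(t)}(v(t))·γ'(t) ). If v(t₀) ∈ F⃗ for some t₀ ∈ I, then v(t) ∈ F⃗ for all t ∈ I. -/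
private lemma lipschitz_aux {E : Type*} [NormedAddCommGroup E] [NormedSpace ℝ E] {k C : ℝ}
    (h : ‖k‖ ≤ C) :
    LipschitzOnWith (Real.toNNReal C) (fun x : E => -(k • x)) Set.univ := by
  refine LipschitzOnWith.of_dist_le_mul fun x _ y _ => ?_
  rw [dist_neg_neg, dist_smul₀]
  apply mul_le_mul_of_nonneg_right _ dist_nonneg
  calc ‖k‖ ≤ C := h
    _ ≤ max C 0 := le_max_left _ _
    _ = _ := (Real.coe_toNNReal' C).symm

/-- Parallel transport, for a projectively flattened connection with associated form
`a{x}(u) = Σ_i a_i(x) u_i`, of a vector tangent to an affine subspace `F` along a C¹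
curve contained in `F`, stays tangent to `F`. -/
theorem stmt2 (d : ℕ) (hd : 2 ≤ d) (U : Set (Fin d → ℝ)) (hU : IsOpen U)
    (a : Fin d → (Fin d → ℝ) → ℝ) (ha : ∀ i, ContDiffOn ℝ (⊤ : ℕ∞) (a i) U)
    (F : AffineSubspace ℝ (Fin d → ℝ))
    (I : Set ℝ) (hI : Convex ℝ I)
    (γ γ' v : ℝ → Fin d → ℝ)
    (hγmem : ∀ t ∈ I, γ t ∈ U ∧ γ t ∈ F)
    (hγ : ∀ t ∈ I, HasDerivWithinAt γ (γ' t) I t)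
    (hγ'cont : ContinuousOn γ' I)
    (hv : ∀ t ∈ I, HasDerivWithinAt v
      (-((∑ i, a i (γ t) * γ' t i) • v t + (∑ i, a i (γ t) * v t i) • γ' t)) I t)
    (t₀ : ℝ) (ht₀ : t₀ ∈ I) (hv₀ : v t₀ ∈ F.direction) :
    ∀ t ∈ I, v t ∈ F.direction := by
  classical
  -- degenerate case: `I ⊆ {t₀}`
  by_cases hsing : ∀ t ∈ I, t = t₀
  · intro t ht; rw [hsing t ht]; exact hv₀
  push_neg at hsing
  obtain ⟨t₂, ht₂, ht₂ne⟩ := hsing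
  -- `I` has nonempty interior, hence unique differentiability
  have hne : (interior I).Nonempty := by
    rcases lt_or_gt_of_ne ht₂ne with h | h
    · refine ⟨(t₂ + t₀) / 2, mem_interior.2 ⟨Set.Ioo t₂ t₀, ?_, isOpen_Ioo, by constructor <;> linarith⟩⟩
      exact fun x hx => hI.ordConnected.out ht₂ ht₀ ⟨hx.1.le, hx.2.le⟩
    · refine ⟨(t₀ + t₂) / 2, mem_interior.2 ⟨Set.Ioo t₀ t₂, ?_, isOpen_Ioo, by constructor <;> linarith⟩⟩
      exact fun x hx => hI.ordConnected.out ht₀ ht₂ ⟨hx.1.le, hx.2.le⟩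
  have hud : UniqueDiffOn ℝ I := uniqueDiffOn_convex hI hne
  -- set up the projection with kernel `F.direction`
  set S : Submodule ℝ (Fin d → ℝ) := F.direction with hS
  obtain ⟨T, hT⟩ := S.exists_isCompl
  set f : (Fin d → ℝ) →ₗ[ℝ] T := T.projectionOnto S hT.symm with hf
  have hker : ∀ x : Fin d → ℝ, f x = 0 ↔ x ∈ S := by
    intro x
    rw [← LinearMap.mem_ker, Submodule.ker_projectionOnto]
  set fL : (Fin d → ℝ) →L[ℝ] T := LinearMap.toContinuousLinearMap f with hfL
  -- the velocity of the curve is tangent to `F`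
  have hγ'S : ∀ t ∈ I, f (γ' t) = 0 := by
    intro t ht
    have h1 : HasDerivWithinAt (fun s => fL (γ s - γ t₀)) (fL (γ' t)) I t :=
      fL.hasFDerivAt.comp_hasDerivWithinAt t ((hγ t ht).sub_const (γ t₀))
    have h0 : ∀ s ∈ I, fL (γ s - γ t₀) = 0 := by
      intro s hs
      have : γ s - γ t₀ ∈ S :=
        AffineSubspace.vsub_mem_direction (hγmem s hs).2 (hγmem t₀ ht₀).2
      exact (hker _).2 this
    have h2 : HasDerivWithinAt (fun s => fL (γ s - γ t₀)) 0 I t :=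
      (hasDerivWithinAt_const t I (0 : T)).congr h0 (h0 t ht)
    have := h1.derivWithin (hud t ht)
    rw [h2.derivWithin (hud t ht)] at this
    exact this.symm
  -- the scalar coefficient
  set c : ℝ → ℝ := fun t => ∑ i, a i (γ t) * γ' t i with hc
  have hγcont : ContinuousOn γ I := fun t ht => (hγ t ht).continuousWithinAt
  have hccont : ContinuousOn c I := by
    apply continuousOn_finset_sum
    intro i _
    exact ((ha i).continuousOn.comp hγcont fun t ht => (hγmem t ht).1).mul
      ((continuous_apply i).comp_continuousOn hγ'cont)
  -- the projected vector field
  set w : ℝ → T := fun t => fL (v t) with hw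
  have hw' : ∀ t ∈ I, HasDerivWithinAt w (-(c t • w t)) I t := by
    intro t ht
    have h1 := fL.hasFDerivAt.comp_hasDerivWithinAt t (hv t ht)
    have : fL (-((∑ i, a i (γ t) * γ' t i) • v t + (∑ i, a i (γ t) * v t i) • γ' t))
        = -(c t • w t) := by
      have h2 : fL (γ' t) = 0 := hγ'S t ht
      simp [map_add, map_smul, h2, hc, hw]
    rwa [this] at h1
  have hwcont : ContinuousOn w I := fun t ht => (hw' t ht).continuousWithinAt
  have hw0 : w t₀ = 0 := (hker _).2 hv₀
  -- main claim: `w` vanishes on `I`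
  suffices hvan : ∀ t ∈ I, w t = 0 by
    intro t ht
    exact (hker _).1 (hvan t ht)
  intro t₁ ht₁
  rcases le_total t₀ t₁ with hle | hle
  · -- forward in time
    have hsub : Set.Icc t₀ t₁ ⊆ I := fun x hx => hI.ordConnected.out ht₀ ht₁ hx
    obtain ⟨C, hC⟩ := (isCompact_Icc (a := t₀) (b := t₁)).exists_bound_of_continuousOn
      (hccont.mono hsub)
    set cc : ℝ → ℝ := fun s => c (min (max s t₀) t₁) with hcc
    have hccmem : ∀ s : ℝ, min (max s t₀) t₁ ∈ Set.Icc t₀ t₁ := fun s =>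
      ⟨le_min (le_max_right s t₀) hle, min_le_right _ _⟩
    have hcceq : ∀ s ∈ Set.Icc t₀ t₁, cc s = c s := by
      intro s hs
      simp [hcc, max_eq_left hs.1, min_eq_left hs.2]
    set K : NNReal := Real.toNNReal C with hK
    have hlip : ∀ s : ℝ, LipschitzOnWith K (fun x : T => -(cc s • x)) Set.univ :=
      fun s => lipschitz_aux (hC _ (hccmem s))
    have := ODE_solution_unique_of_mem_Icc_right (v := fun s (x : T) => -(cc s • x))
      (s := fun _ => (Set.univ : Set T)) (K := K) (g := fun _ : ℝ => (0 : T)) (fun s _ => hlip s)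
      (hwcont.mono hsub)
      (fun s hs => by
        have hd : HasDerivWithinAt w (-(cc s • w s)) (Set.Icc s t₁) s := by
          rw [hcceq s ⟨hs.1, hs.2.le⟩]
          exact (hw' s (hsub ⟨hs.1, hs.2.le⟩)).mono fun x hx =>
            hsub ⟨hs.1.trans hx.1, hx.2⟩
        exact hd.mono_of_mem_nhdsWithin (Icc_mem_nhdsGE_of_mem ⟨le_rfl, hs.2⟩))
      (fun _ _ => Set.mem_univ _)
      continuousOn_const
      (fun s hs => by
        simpa using (hasDerivWithinAt_const s (Set.Ici s) (0 : T)))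
      (fun _ _ => Set.mem_univ _)
      (by simpa using hw0)
    simpa using this ⟨hle, le_rfl⟩
  · -- backward in time
    have hsub : Set.Icc t₁ t₀ ⊆ I := fun x hx => hI.ordConnected.out ht₁ ht₀ hx
    obtain ⟨C, hC⟩ := (isCompact_Icc (a := t₁) (b := t₀)).exists_bound_of_continuousOn
      (hccont.mono hsub)
    set cc : ℝ → ℝ := fun s => c (min (max s t₁) t₀) with hcc
    have hccmem : ∀ s : ℝ, min (max s t₁) t₀ ∈ Set.Icc t₁ t₀ := fun s =>
      ⟨le_min (le_max_right s t₁) hle, min_le_right _ _⟩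
    have hcceq : ∀ s ∈ Set.Icc t₁ t₀, cc s = c s := by
      intro s hs
      simp [hcc, max_eq_left hs.1, min_eq_left hs.2]
    set K : NNReal := Real.toNNReal C with hK
    have hlip : ∀ s : ℝ, LipschitzOnWith K (fun x : T => -(cc s • x)) Set.univ :=
      fun s => lipschitz_aux (hC _ (hccmem s))
    have := ODE_solution_unique_of_mem_Icc_left (v := fun s (x : T) => -(cc s • x))
      (s := fun _ => (Set.univ : Set T)) (K := K) (g := fun _ : ℝ => (0 : T)) (fun s _ => hlip s)
      (hwcont.mono hsub)
      (fun s hs => by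
        have hd : HasDerivWithinAt w (-(cc s • w s)) (Set.Icc t₁ s) s := by
          rw [hcceq s ⟨hs.1.le, hs.2⟩]
          exact (hw' s (hsub ⟨hs.1.le, hs.2⟩)).mono fun x hx =>
            hsub ⟨hx.1, hx.2.trans hs.2⟩
        exact hd.mono_of_mem_nhdsWithin (Icc_mem_nhdsLE_of_mem ⟨hs.1, le_rfl⟩))
      (fun _ _ => Set.mem_univ _)
      continuousOn_const
      (fun s hs => by
        simpa using (hasDerivWithinAt_const s (Set.Iic s) (0 : T)))
      (fun _ _ => Set.mem_univ _)
      (by simpa using hw0)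
    simpa using this ⟨le_rfl, hle⟩
end

section
/- Let U ⊆ ℝ^d be open (d ≥ 1), let ψ : U → ℝ be smooth and nowhere vanishing, and set a_i = −(∂_i ψ)/ψ and a{x}(u) = Σ_i a_i(x) u_i. Let γ : I → U be a C¹ curve and let v_1,…,v_d : I → ℝ^d be differentiable solutions of the parallel-transport equation v_m'(t) = −( a{γ(t)}(γ'(t))·v_m(t) + a{γ(t)}(v_m(t))·γ'(t) ) for m = 1,…,d. Then the function t ↦ det(v_1(t),…,v_d(t)) / ψ(γ(t))^{d+1} is constant on I. In other words, the volume form dx_1∧⋯∧dx_d / ψ^{d+1} is preserved by parallel transport. -/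
/-- The partial derivative `∂_j f` in the direction of the `j`-th coordinate. -/
noncomputable def pder {d : ℕ} (f : (Fin d → ℝ) → ℝ) (j : Fin d) (x : Fin d → ℝ) : ℝ :=
  fderiv ℝ f x (Pi.single j 1)

open Finset Matrix

-- determinant as a continuous multilinear map in the rows
noncomputable def detCM (d : ℕ) : ContinuousMultilinearMap ℝ (fun _ : Fin d => (Fin d → ℝ)) ℝ :=
  (Matrix.detRowAlternating (n := Fin d) (R := ℝ)).toMultilinearMap.mkContinuous
    (Nat.factorial d : ℝ) (by
      intro m
      have h1 : (Matrix.detRowAlternating (n := Fin d) (R := ℝ)).toMultilinearMap m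
          = (Matrix.of m).det := rfl
      rw [h1, Matrix.det_apply]
      refine (norm_sum_le _ _).trans ?_
      have hterm : ∀ σ : Equiv.Perm (Fin d),
          ‖Equiv.Perm.sign σ • ∏ i, (Matrix.of m) (σ i) i‖ ≤ ∏ i, ‖m i‖ := by
        intro σ
        have habs : ‖Equiv.Perm.sign σ • ∏ i, (Matrix.of m) (σ i) i‖
            = ‖∏ i, (Matrix.of m) (σ i) i‖ := by
          rcases Int.units_eq_one_or (Equiv.Perm.sign σ) with h | h <;>
            simp [h, Units.smul_def]
        rw [habs]
        calc ‖∏ i, (Matrix.of m) (σ i) i‖ = ∏ i, ‖m (σ i) i‖ := by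
              rw [norm_prod]; rfl
          _ ≤ ∏ i, ‖m (σ i)‖ :=
              Finset.prod_le_prod (fun i _ => norm_nonneg _)
                (fun i _ => norm_le_pi_norm (m (σ i)) i)
          _ = ∏ i, ‖m i‖ := Equiv.prod_comp σ (fun i => ‖m i‖)
      calc ∑ σ : Equiv.Perm (Fin d), ‖Equiv.Perm.sign σ • ∏ i, (Matrix.of m) (σ i) i‖
          ≤ ∑ _σ : Equiv.Perm (Fin d), ∏ i, ‖m i‖ := Finset.sum_le_sum fun σ _ => hterm σ
        _ = (Nat.factorial d : ℝ) * ∏ i, ‖m i‖ := by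
            rw [Finset.sum_const, Finset.card_univ, Fintype.card_perm, Fintype.card_fin,
              nsmul_eq_mul])

lemma detCM_apply {d : ℕ} (m : Fin d → Fin d → ℝ) : detCM d m = (Matrix.of m).det := rfl

lemma det_hasDerivWithinAt {d : ℕ} {I : Set ℝ} {t : ℝ}
    (c : Fin d → ℝ → Fin d → ℝ) (c' : Fin d → Fin d → ℝ)
    (h : ∀ m, HasDerivWithinAt (c m) (c' m) I t) :
    HasDerivWithinAt (fun s => (Matrix.of fun m i => c m s i).det)
      (∑ m, ((Matrix.of fun m i => c m t i).updateRow m (c' m)).det) I t := by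
  have h1 : HasDerivWithinAt (fun s => (fun m => c m s)) (fun m => c' m) I t :=
    hasDerivWithinAt_pi.2 h
  have h2 := ((detCM d).hasFDerivAt (fun m => c m t)).comp_hasDerivWithinAt t h1
  have h3 : ((detCM d).linearDeriv (fun m => c m t)) (fun m => c' m)
      = ∑ m, ((Matrix.of fun m i => c m t i).updateRow m (c' m)).det := by
    rw [ContinuousMultilinearMap.linearDeriv_apply]
    congr 1
  exact h3 ▸ h2

lemma sum_linear_det {d : ℕ} (M : Matrix (Fin d) (Fin d) ℝ) (b w : Fin d → ℝ) :
    ∑ m, (∑ i, b i * M m i) * (M.updateRow m w).det = (∑ i, b i * w i) * M.det := by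
  have hcr : ∀ m, (M.updateRow m w).det = Matrix.cramer Mᵀ w m := by
    intro m
    have hMt : M.updateRow m w = (Mᵀ.updateCol m w)ᵀ := by
      ext i j
      simp [Matrix.updateRow_apply, Matrix.updateCol_apply, Matrix.transpose_apply]
    rw [Matrix.cramer_apply, hMt, Matrix.det_transpose]
  have hmv := Matrix.mulVec_cramer Mᵀ w
  calc ∑ m, (∑ i, b i * M m i) * (M.updateRow m w).det
      = ∑ i, b i * ∑ m, Mᵀ i m * Matrix.cramer Mᵀ w m := by
        simp_rw [hcr, Finset.sum_mul, Matrix.transpose_apply]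
        rw [Finset.sum_comm]
        simp_rw [Finset.mul_sum]
        congr 1; ext i; congr 1; ext m; ring
    _ = ∑ i, b i * (Mᵀ.det • w) i := by
        simp_rw [← hmv]; rfl
    _ = (∑ i, b i * w i) * M.det := by
        simp only [Pi.smul_apply, smul_eq_mul, Matrix.det_transpose, Finset.sum_mul]
        congr 1; ext i; ring

lemma clm_apply_eq_sum {d : ℕ} (L : (Fin d → ℝ) →L[ℝ] ℝ) (u : Fin d → ℝ) :
    L u = ∑ i, u i * L (Pi.single i 1) := by
  conv_lhs => rw [← Finset.univ_sum_single u]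
  rw [map_sum]
  congr 1; ext i
  have h : Pi.single i (u i) = u i • (Pi.single i 1 : Fin d → ℝ) := by
    rw [← Pi.single_smul, smul_eq_mul, mul_one]
  rw [h, L.map_smul, smul_eq_mul]

/-- For the incompressible projectively flattened connection of potential `ψ`
(`a_i = −∂_iψ/ψ`), the volume form `dx_1∧⋯∧dx_d / ψ^{d+1}` is preserved by parallel
transport: if `v_1, …, v_d` are parallel along `γ`, then
`det(v_1(t),…,v_d(t)) / ψ(γ(t))^{d+1}` is constant. -/
theorem stmt5 (d : ℕ) (hd : 1 ≤ d) (U : Set (Fin d → ℝ)) (hU : IsOpen U)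
    (ψ : (Fin d → ℝ) → ℝ) (hψ : ContDiffOn ℝ (⊤ : ℕ∞) ψ U) (hψ0 : ∀ x ∈ U, ψ x ≠ 0)
    (I : Set ℝ) (hI : Convex ℝ I)
    (γ γ' : ℝ → Fin d → ℝ) (hγmem : ∀ t ∈ I, γ t ∈ U)
    (hγ : ∀ t ∈ I, HasDerivWithinAt γ (γ' t) I t) (hγ' : ContinuousOn γ' I)
    (v : Fin d → ℝ → Fin d → ℝ)
    (hv : ∀ m : Fin d, ∀ t ∈ I, HasDerivWithinAt (v m)
      (-((∑ i, (-(pder ψ i (γ t)) / ψ (γ t)) * γ' t i) • v m t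
          + (∑ i, (-(pder ψ i (γ t)) / ψ (γ t)) * v m t i) • γ' t)) I t) :
    ∀ s ∈ I, ∀ t ∈ I,
      (Matrix.of fun m i => v m s i).det / ψ (γ s) ^ (d + 1)
        = (Matrix.of fun m i => v m t i).det / ψ (γ t) ^ (d + 1) := by
  set F : ℝ → ℝ := fun s => (Matrix.of fun m i => v m s i).det / ψ (γ s) ^ (d + 1) with hF
  have key : ∀ t ∈ I, HasDerivWithinAt F 0 I t := by
    intro t ht
    have hxU : γ t ∈ U := hγmem t ht
    set x := γ t with hx
    set L := fderiv ℝ ψ x with hL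
    have hψx : DifferentiableAt ℝ ψ x :=
      (hψ.differentiableOn (by simp)).differentiableAt (hU.mem_nhds hxU)
    have hψγ : HasDerivWithinAt (fun s => ψ (γ s)) (L (γ' t)) I t :=
      hψx.hasFDerivAt.comp_hasDerivWithinAt t (hγ t ht)
    set a : Fin d → ℝ := fun i => -(pder ψ i x) / ψ x with ha
    set α : ℝ := ∑ i, a i * γ' t i with hα
    set M : Matrix (Fin d) (Fin d) ℝ := Matrix.of fun m i => v m t i with hM
    have hψ0' : ψ x ≠ 0 := hψ0 x hxU
    have hLγ : L (γ' t) = -(α * ψ x) := by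
      rw [clm_apply_eq_sum]
      have hterm : ∀ i, γ' t i * L (Pi.single i 1) = -(a i * γ' t i * ψ x) := by
        intro i
        have hp : pder ψ i x = L (Pi.single i 1) := rfl
        rw [ha]
        simp only
        rw [← hp]
        field_simp
      rw [Finset.sum_congr rfl fun i _ => hterm i, hα, Finset.sum_mul]
      rw [Finset.sum_neg_distrib]
    have hq : HasDerivWithinAt (fun s => ψ (γ s) ^ (d + 1))
        ((((d : ℝ) + 1)) * ψ x ^ d * (-(α * ψ x))) I t := by
      have h := hψγ.pow (d + 1)
      rw [hLγ] at h
      have hc : ((d + 1 : ℕ) : ℝ) = (d : ℝ) + 1 := by push_cast; ring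
      simp only [mul_neg]
      simp [hc] at h
      exact h
    have hG : HasDerivWithinAt (fun s => (Matrix.of fun m i => v m s i).det)
        (∑ m, (M.updateRow m (-(α • M m + (∑ i, a i * M m i) • γ' t))).det) I t :=
      det_hasDerivWithinAt v
        (fun m => -(α • M m + (∑ i, a i * M m i) • γ' t))
        (fun m => hv m t ht)
    have hrow : ∀ m : Fin d, (M.updateRow m (-(α • M m + (∑ i, a i * M m i) • γ' t))).det
        = -(α * M.det + (∑ i, a i * M m i) * (M.updateRow m (γ' t)).det) := by
      intro m
      have h1 : (-(α • M m + (∑ i, a i * M m i) • γ' t))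
          = (-1 : ℝ) • (α • M m + (∑ i, a i * M m i) • γ' t) := by
        rw [neg_one_smul]
      rw [h1, Matrix.det_updateRow_smul, Matrix.det_updateRow_add,
        Matrix.det_updateRow_smul, Matrix.det_updateRow_smul, Matrix.updateRow_eq_self]
      ring
    have hsum : (∑ m, (M.updateRow m (-(α • M m + (∑ i, a i * M m i) • γ' t))).det)
        = -(((d : ℝ) + 1) * α * M.det) := by
      rw [Finset.sum_congr rfl fun m _ => hrow m]
      rw [Finset.sum_neg_distrib, Finset.sum_add_distrib, sum_linear_det M a (γ' t),
        Finset.sum_const, Finset.card_univ, Fintype.card_fin, nsmul_eq_mul, ← hα]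
      ring
    rw [hsum] at hG
    have hne : ψ (γ t) ^ (d + 1) ≠ 0 := pow_ne_zero _ hψ0'
    have hdiv := hG.div hq hne
    have hzero : ((-(((d : ℝ) + 1) * α * M.det)) * ψ (γ t) ^ (d + 1)
          - (Matrix.of fun m i => v m t i).det * (((d : ℝ) + 1) * ψ x ^ d * (-(α * ψ x))))
        / (ψ (γ t) ^ (d + 1)) ^ 2 = 0 := by
      rw [← hM, ← hx]
      have hnum : (-(((d : ℝ) + 1) * α * M.det)) * ψ x ^ (d + 1)
          - M.det * (((d : ℝ) + 1) * ψ x ^ d * (-(α * ψ x))) = 0 := by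
        ring
      rw [hnum, zero_div]
    rw [hzero] at hdiv
    exact hdiv
  intro s hs t ht
  have hb := Convex.norm_image_sub_le_of_norm_hasDerivWithin_le (f' := fun _ => (0 : ℝ))
    (C := 0) (fun u hu => key u hu) (fun u hu => by simp) hI ht hs
  rw [zero_mul] at hb
  have h2 := norm_le_zero_iff.mp hb
  have h3 : F s = F t := sub_eq_zero.mp h2
  exact h3
end

section
/- Let U ⊆ ℝ^d be open (d ≥ 1) and let a_1,…,a_d : U → ℝ be smooth. Define R^l_{ijk} = δ_{il}(a_j a_k − ∂_j a_k) − δ_{jl}(a_i a_k − ∂_i a_k) + δ_{kl}(∂_i a_j − ∂_j a_i) and Ric_{jk} = Σ_i R^i_{ijk}. Then Ric_{jk} = 0 on U for all j,k if and only if R^l_{ijk} = 0 on U for all i,j,k,l; that is, for projectively flattened connections, Ricci-flatness is equivalent to flatness. -/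
/-- The curvature coefficients `R^l_{ijk}` of the projectively flattened connection
with associated form coefficients `a_1, …, a_d`. -/
noncomputable def curvR {d : ℕ} (a : Fin d → (Fin d → ℝ) → ℝ) (i j k l : Fin d)
    (x : Fin d → ℝ) : ℝ :=
  (if i = l then a j x * a k x - pder (a k) j x else 0)
    - (if j = l then a i x * a k x - pder (a k) i x else 0)
    + (if k = l then pder (a j) i x - pder (a i) j x else 0)

/-- The Ricci coefficients `Ric_{jk} = Σ_i R^i_{ijk}`. -/
noncomputable def ricci {d : ℕ} (a : Fin d → (Fin d → ℝ) → ℝ) (j k : Fin d)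
    (x : Fin d → ℝ) : ℝ :=
  ∑ i, curvR a i j k i x

lemma ricci_eq {d : ℕ} (a : Fin d → (Fin d → ℝ) → ℝ) (j k : Fin d) (x : Fin d → ℝ) :
    ricci a j k x = (d : ℝ) * (a j x * a k x - pder (a k) j x)
      - (a k x * a j x - pder (a j) k x) := by
  unfold ricci curvR
  simp [Finset.sum_add_distrib, Finset.sum_sub_distrib, Finset.sum_ite_eq, Finset.sum_const,
    Finset.card_fin]
  ring

/-- For a projectively flattened connection, Ricci-flatness is equivalent to
flatness (vanishing of the whole curvature tensor). -/
theorem stmt6 (d : ℕ) (hd : 1 ≤ d) (U : Set (Fin d → ℝ)) (hU : IsOpen U)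
    (a : Fin d → (Fin d → ℝ) → ℝ) (ha : ∀ i, ContDiffOn ℝ (⊤ : ℕ∞) (a i) U) :
    (∀ x ∈ U, ∀ j k : Fin d, ricci a j k x = 0) ↔
      (∀ x ∈ U, ∀ i j k l : Fin d, curvR a i j k l x = 0) := by
  constructor
  · intro h x hx i j k l
    rcases eq_or_lt_of_le hd with hd1 | hd2
    · -- d = 1 : all indices coincide and curvature vanishes identically
      have : Subsingleton (Fin d) := by
        subst hd1; infer_instance
      have hij : i = j := Subsingleton.elim i j
      subst hij
      simp [curvR]
    · -- d ≥ 2 : Ricci-flat forces S = 0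
      have hS : ∀ p q : Fin d, a p x * a q x - pder (a q) p x = 0 := by
        intro p q
        have e1 : (d : ℝ) * (a p x * a q x - pder (a q) p x)
            - (a q x * a p x - pder (a p) q x) = 0 := by
          rw [← ricci_eq]; exact h x hx p q
        have e2 : (d : ℝ) * (a q x * a p x - pder (a p) q x)
            - (a p x * a q x - pder (a q) p x) = 0 := by
          rw [← ricci_eq]; exact h x hx q p
        have key : ((d : ℝ) ^ 2 - 1) * (a p x * a q x - pder (a q) p x) = 0 := by
          linear_combination (d : ℝ) * e1 + e2
        have hdr : (2 : ℝ) ≤ (d : ℝ) := by exact_mod_cast hd2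
        have hne : ((d : ℝ) ^ 2 - 1) ≠ 0 := by nlinarith
        exact (mul_eq_zero.mp key).resolve_left hne
      have h1 := hS j k
      have h2 := hS i k
      have h3 := hS i j
      have h4 := hS j i
      unfold curvR
      split_ifs <;> linarith [mul_comm (a i x) (a j x)]
  · intro h x hx j k
    unfold ricci
    exact Finset.sum_eq_zero fun i _ => h x hx i j k i
end

section
/- Let d ≥ 2, 0 ≤ p ≤ d, with ε_i = 1 for i ≤ p and ε_i = −1 for i > p, q(x) = Σ_i ε_i x_i², λ ∈ ℝ, and let U ⊆ ℝ^d be a connected open set on which ψ(x) := q(x) + λ does not vanish. Suppose ρ : U → (0,∞) is a function such that for every C² curve γ : I → U satisfying the geodesic equation γ''(t) = 2((ψ∘γ)'(t)/ψ(γ(t))) γ'(t), the map t ↦ ρ(γ(t)) · q(γ'(t)) is constant. Then ρ · ψ⁴ is constant on U; equivalently, up to a multiplicative constant, h = g/ψ⁴ is the unique metric conformal to the flat pseudo-Euclidean metric g that is isochrone to the stiff connection of potential ψ. -/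
/-- The sign `ε_i` of the standard quadratic form of signature `(p, d−p)`. -/
def eps (d p : ℕ) (i : Fin d) : ℝ := if (i : ℕ) < p then 1 else -1

/-- The standard bilinear form of signature `(p, d−p)` on `ℝ^d`. -/
def bform (d p : ℕ) (x y : Fin d → ℝ) : ℝ := ∑ i, eps d p i * x i * y i

/-- The standard quadratic form of signature `(p, d−p)` on `ℝ^d`. -/
def qf (d p : ℕ) (x : Fin d → ℝ) : ℝ := ∑ i, eps d p i * x i ^ 2


lemma qf_add_smul (d p : ℕ) (x v : Fin d → ℝ) (u : ℝ) :
    qf d p (x + u • v) = qf d p x + 2*u*(bform d p x v) + u^2 * qf d p v := by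
  simp only [qf, bform, Pi.add_apply, Pi.smul_apply, smul_eq_mul, Finset.mul_sum,
    ← Finset.sum_add_distrib]
  exact Finset.sum_congr rfl fun i _ => by ring

lemma bform_add_smul (d p : ℕ) (x v : Fin d → ℝ) (u : ℝ) :
    bform d p (x + u • v) v = bform d p x v + u * qf d p v := by
  simp only [qf, bform, Pi.add_apply, Pi.smul_apply, smul_eq_mul, Finset.mul_sum,
    ← Finset.sum_add_distrib]
  exact Finset.sum_congr rfl fun i _ => by ring

lemma qf_smul (d p : ℕ) (c : ℝ) (v : Fin d → ℝ) : qf d p (c • v) = c^2 * qf d p v := by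
  simp only [qf, Pi.smul_apply, smul_eq_mul, Finset.mul_sum]
  exact Finset.sum_congr rfl fun i _ => by ring

lemma bform_smul_right (d p : ℕ) (c : ℝ) (x v : Fin d → ℝ) :
    bform d p x (c • v) = c * bform d p x v := by
  simp only [bform, Pi.smul_apply, smul_eq_mul, Finset.mul_sum]
  exact Finset.sum_congr rfl fun i _ => by ring

lemma qf_neg (d p : ℕ) (v : Fin d → ℝ) : qf d p (-v) = qf d p v := by
  simp only [qf, Pi.neg_apply]
  exact Finset.sum_congr rfl fun i _ => by ring

lemma bform_comm (d p : ℕ) (x y : Fin d → ℝ) : bform d p x y = bform d p y x := by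
  simp only [bform]
  exact Finset.sum_congr rfl fun i _ => by ring

lemma eps_ne_zero (d p : ℕ) (i : Fin d) : eps d p i ≠ 0 := by
  unfold eps; split <;> norm_num

lemma qf_single (d p : ℕ) (i0 : Fin d) : qf d p (Pi.single i0 1) = eps d p i0 := by
  simp only [qf]
  rw [Finset.sum_eq_single i0]
  · simp
  · intro i _ hne; simp [Pi.single_apply, hne]
  · simp

lemma bform_neg_left (d p : ℕ) (x y : Fin d → ℝ) : bform d p (-x) y = -bform d p x y := by
  simp only [bform, Pi.neg_apply, ← Finset.sum_neg_distrib]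
  exact Finset.sum_congr rfl fun i _ => by ring


lemma seg_const (d p : ℕ) (lam : ℝ) (U : Set (Fin d → ℝ))
    (hψ : ∀ x ∈ U, qf d p x + lam ≠ 0)
    (ρ : (Fin d → ℝ) → ℝ)
    (hiso : ∀ (I : Set ℝ), Convex ℝ I → ∀ γ γ' γ'' : ℝ → Fin d → ℝ,
      (∀ t ∈ I, γ t ∈ U) →
      (∀ t ∈ I, HasDerivWithinAt γ (γ' t) I t) →
      (∀ t ∈ I, HasDerivWithinAt γ' (γ'' t) I t) →
      (∀ t ∈ I, γ'' t = (4 * bform d p (γ t) (γ' t) / (qf d p (γ t) + lam)) • γ' t) →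
      ∀ s ∈ I, ∀ t ∈ I, ρ (γ s) * qf d p (γ' s) = ρ (γ t) * qf d p (γ' t))
    (x v : Fin d → ℝ) (hv : qf d p v ≠ 0)
    (hseg : ∀ u : ℝ, u ∈ Set.Icc (0:ℝ) 1 → x + u • v ∈ U) :
    ρ x * (qf d p x + lam) ^ 4 = ρ (x + v) * (qf d p (x + v) + lam) ^ 4 := by
  set A := qf d p v with hA
  set B := bform d p x v with hB
  set C := qf d p x + lam with hC
  set φ : ℝ → ℝ := fun u => A*u^2 + 2*B*u + C with hφ
  have hφeq : ∀ u : ℝ, qf d p (x + u • v) + lam = φ u := by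
    intro u; rw [qf_add_smul]; simp only [hφ]; ring
  have hbeq : ∀ u : ℝ, bform d p (x + u • v) v = B + u * A := by
    intro u; rw [bform_add_smul]
  have contφ : Continuous φ := by fun_prop
  have hφne : ∀ u ∈ Set.Icc (0:ℝ) 1, φ u ≠ 0 := by
    intro u hu; rw [← hφeq u]; exact hψ _ (hseg u hu)
  -- clamp to [0,1]
  set cl : ℝ → ℝ := fun u => max 0 (min u 1) with hcl
  have cl_mem : ∀ u, cl u ∈ Set.Icc (0:ℝ) 1 := by
    intro u
    refine ⟨le_max_left _ _, max_le (by norm_num) (min_le_right _ _)⟩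
  have cl_id : ∀ u ∈ Set.Icc (0:ℝ) 1, cl u = u := by
    intro u hu
    simp only [hcl]
    rw [min_eq_left hu.2, max_eq_right hu.1]
  have cl_ge : ∀ u : ℝ, 1 ≤ u → cl u = 1 := by
    intro u hu; simp only [hcl]; rw [min_eq_right hu]; norm_num
  have cl_le : ∀ u : ℝ, u ≤ 0 → cl u = 0 := by
    intro u hu; simp only [hcl]
    rw [min_eq_left (hu.trans (by norm_num)), max_eq_left hu]
  have cont_cl : Continuous cl := continuous_const.max (continuous_id.min continuous_const)
  set g : ℝ → ℝ := fun u => ((φ (cl u))^2)⁻¹ with hg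
  have gpos : ∀ u, 0 < g u := by
    intro u
    exact inv_pos.2 (pow_two_pos_of_ne_zero (hφne _ (cl_mem u)))
  have gcont : Continuous g := by
    refine Continuous.inv₀ ((contφ.comp cont_cl).pow 2) ?_
    intro u; exact pow_ne_zero _ (hφne _ (cl_mem u))
  set F : ℝ → ℝ := fun t => ∫ s in (0:ℝ)..t, g s with hFdef
  have hF : ∀ t, HasDerivAt F (g t) t := fun t =>
    (gcont.integral_hasStrictDerivAt 0 t).hasDerivAt
  have Fmono : StrictMono F := by
    apply strictMono_of_deriv_pos
    intro t; rw [(hF t).deriv]; exact gpos t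
  have Fcont : Continuous F := continuous_iff_continuousAt.2 fun t => (hF t).continuousAt
  have hFtail : ∀ t : ℝ, 1 ≤ t → F t = F 1 + (t - 1) * g 1 := by
    intro t ht
    have hint : ∫ s in (1:ℝ)..t, g s = (t - 1) * g 1 := by
      rw [intervalIntegral.integral_congr (g := fun _ => g 1) ?_, intervalIntegral.integral_const,
        smul_eq_mul]
      intro u hu
      rw [Set.uIcc_of_le ht] at hu
      simp only [hg]
      rw [cl_ge u hu.1, cl_ge 1 le_rfl]
    have := intervalIntegral.integral_add_adjacent_intervals
      (gcont.intervalIntegrable (μ := MeasureTheory.volume) (0:ℝ) 1) (gcont.intervalIntegrable (μ := MeasureTheory.volume) (1:ℝ) t)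
    simp only [hFdef]
    rw [← this, hint]
  have hFhead : ∀ t : ℝ, t ≤ 0 → F t = t * g 0 := by
    intro t ht
    simp only [hFdef]
    rw [intervalIntegral.integral_congr (g := fun _ => g 0) ?_, intervalIntegral.integral_const,
      smul_eq_mul]
    · ring
    intro u hu
    rw [Set.uIcc_of_ge ht] at hu
    simp only [hg]
    rw [cl_le u hu.2, cl_le 0 le_rfl]
  have htop : Filter.Tendsto F Filter.atTop Filter.atTop := by
    apply Filter.tendsto_atTop_mono' Filter.atTop (f₁ := fun t => F 1 + (t - 1) * g 1)
    · filter_upwards [Filter.eventually_ge_atTop (1:ℝ)] with t ht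
      rw [hFtail t ht]
    · apply Filter.tendsto_atTop_add_const_left
      exact Filter.Tendsto.atTop_mul_const (gpos 1)
        (Filter.tendsto_atTop_add_const_right _ (-1) Filter.tendsto_id)
  have hbot : Filter.Tendsto F Filter.atBot Filter.atBot := by
    apply Filter.tendsto_atBot_mono' Filter.atBot (f₁ := fun t => t * g 0)
    · filter_upwards [Filter.eventually_le_atBot (0:ℝ)] with t ht
      rw [hFhead t ht]
    · exact Filter.Tendsto.atBot_mul_const (gpos 0) Filter.tendsto_id
  have hsurj : Function.Surjective F := Fcont.surjective htop hbot
  set e : ℝ ≃o ℝ := StrictMono.orderIsoOfSurjective F Fmono hsurj with he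
  set w : ℝ → ℝ := fun t => e.symm t with hwdef
  have hwF : ∀ t, w (F t) = t := fun t => e.symm_apply_apply t
  have hFw : ∀ t, F (w t) = t := fun t => e.apply_symm_apply t
  have wcont : Continuous w := e.symm.continuous
  have wmono : Monotone w := e.symm.monotone
  have hw : ∀ t, HasDerivAt w (g (w t))⁻¹ t := by
    intro t
    exact HasDerivAt.of_local_left_inverse (wcont.continuousAt) (hF (w t)) (gpos (w t)).ne'
      (Filter.Eventually.of_forall hFw)
  have hF01 : F 0 ≤ F 1 := (Fmono (by norm_num : (0:ℝ) < 1)).le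
  set I : Set ℝ := Set.Icc (F 0) (F 1) with hI
  have hwI : ∀ t ∈ I, w t ∈ Set.Icc (0:ℝ) 1 := by
    intro t ht
    constructor
    · have := wmono ht.1; rwa [hwF] at this
    · have := wmono ht.2; rwa [hwF] at this
  have hginv : ∀ t ∈ I, (g (w t))⁻¹ = (φ (w t))^2 := by
    intro t ht
    simp only [hg]
    rw [cl_id _ (hwI t ht), inv_inv]
  set γ : ℝ → Fin d → ℝ := fun t => x + w t • v with hγ
  set γ1 : ℝ → Fin d → ℝ := fun t => ((φ (w t))^2) • v with hγ1
  set γ2 : ℝ → Fin d → ℝ := fun t =>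
    ((2*A*(w t) + 2*B) * (g (w t))⁻¹ * (2 * φ (w t))) • v with hγ2
  have hφd : ∀ u : ℝ, HasDerivAt φ (2*A*u + 2*B) u := by
    intro u
    have h1 : HasDerivAt (fun u : ℝ => A*u^2 + 2*B*u + C) (A*(2*u) + 2*B) u := by
      apply HasDerivAt.add_const
      apply HasDerivAt.add
      · simpa using ((hasDerivAt_pow 2 u).const_mul A)
      · simpa using (hasDerivAt_id u).const_mul (2*B)
    convert h1 using 1; ring
  have hdφw : ∀ t, HasDerivAt (fun t => φ (w t)) ((2*A*(w t) + 2*B) * (g (w t))⁻¹) t := by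
    intro t
    exact (hφd (w t)).comp t (hw t)
  have hγmem : ∀ t ∈ I, γ t ∈ U := fun t ht => hseg (w t) (hwI t ht)
  have hd1 : ∀ t ∈ I, HasDerivWithinAt γ (γ1 t) I t := by
    intro t ht
    have : HasDerivAt γ ((g (w t))⁻¹ • v) t := ((hw t).smul_const v).const_add x
    have h2 := this.hasDerivWithinAt (s := I)
    rwa [hginv t ht] at h2
  have hd2 : ∀ t ∈ I, HasDerivWithinAt γ1 (γ2 t) I t := by
    intro t ht
    have h1 : HasDerivAt (fun t => (φ (w t))^2)
        ((2*A*(w t) + 2*B) * (g (w t))⁻¹ * (2 * φ (w t))) t := by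
      have := ((hdφw t).fun_pow 2)
      refine this.congr_deriv ?_
      rw [show (2:ℕ) - 1 = 1 from rfl]; push_cast; ring
    exact (h1.smul_const v).hasDerivWithinAt
  have hgeo : ∀ t ∈ I, γ2 t = (4 * bform d p (γ t) (γ1 t) / (qf d p (γ t) + lam)) • γ1 t := by
    intro t ht
    have hb : bform d p (γ t) (γ1 t) = (φ (w t))^2 * (B + (w t) * A) := by
      simp only [hγ, hγ1]
      rw [bform_smul_right, hbeq]
    have hq : qf d p (γ t) + lam = φ (w t) := hφeq (w t)
    simp only [hγ2, hγ1, hb, hq, smul_smul]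
    congr 1
    rw [hginv t ht]
    rw [show (φ (w t))^2 • v = γ1 t from rfl, hb]
    have hne := hφne _ (hwI t ht)
    field_simp
    ring
  have key := hiso I (convex_Icc _ _) γ γ1 γ2 hγmem hd1 hd2 hgeo
    (F 0) (Set.left_mem_Icc.2 hF01) (F 1) (Set.right_mem_Icc.2 hF01)
  have hw0 : w (F 0) = 0 := hwF 0
  have hw1 : w (F 1) = 1 := hwF 1
  have hγ0 : γ (F 0) = x := by simp [hγ, hw0]
  have hγF1 : γ (F 1) = x + v := by simp [hγ, hw1]
  have hφ0 : φ 0 = C := by simp [hφ]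
  have hφ1 : φ 1 = qf d p (x + v) + lam := by
    have := hφeq 1
    rw [one_smul] at this
    rw [← this]
  rw [hγ0, hγF1] at key
  simp only [hγ1, hw0, hw1, qf_smul, hφ0, hφ1] at key
  have key2 : (ρ x * C ^ 4) * A = (ρ (x + v) * (qf d p (x+v) + lam) ^ 4) * A := by
    rw [hA]; linear_combination key
  have := mul_right_cancel₀ hv key2
  rw [hC] at this
  exact this

/-- Uniqueness of the isochrone metric: if `ρ > 0` on a connected open set `U` on
which `ψ = q + λ` does not vanish, and every geodesic `γ` of the stiff connection of
potential `ψ` (i.e. every solution of `γ'' = (4⟨γ,γ'⟩/ψ(γ)) γ'`) has constant squared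
speed `ρ(γ)·q(γ')`, then `ρ·ψ⁴` is constant on `U`. -/
theorem stmt8 (d p : ℕ) (hd : 2 ≤ d) (hp : p ≤ d) (lam : ℝ)
    (U : Set (Fin d → ℝ)) (hUopen : IsOpen U) (hUconn : IsConnected U)
    (hψ : ∀ x ∈ U, qf d p x + lam ≠ 0)
    (ρ : (Fin d → ℝ) → ℝ) (hρ : ∀ x ∈ U, 0 < ρ x)
    (hiso : ∀ (I : Set ℝ), Convex ℝ I → ∀ γ γ' γ'' : ℝ → Fin d → ℝ,
      (∀ t ∈ I, γ t ∈ U) →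
      (∀ t ∈ I, HasDerivWithinAt γ (γ' t) I t) →
      (∀ t ∈ I, HasDerivWithinAt γ' (γ'' t) I t) →
      (∀ t ∈ I, γ'' t = (4 * bform d p (γ t) (γ' t) / (qf d p (γ t) + lam)) • γ' t) →
      ∀ s ∈ I, ∀ t ∈ I, ρ (γ s) * qf d p (γ' s) = ρ (γ t) * qf d p (γ' t)) :
    ∃ c : ℝ, ∀ x ∈ U, ρ x * (qf d p x + lam) ^ 4 = c := by
  set f : (Fin d → ℝ) → ℝ := fun x => ρ x * (qf d p x + lam) ^ 4 with hf
  -- local constancy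
  have key : ∀ z ∈ U, ∃ ε > 0, Metric.ball z ε ⊆ U ∧ ∀ y ∈ Metric.ball z ε, f y = f z := by
    intro z hz
    obtain ⟨r, hr, hball⟩ := Metric.isOpen_iff.1 hUopen z hz
    refine ⟨r/4, by linarith, (Metric.ball_subset_ball (by linarith)).trans hball, ?_⟩
    intro y hy
    set i0 : Fin d := ⟨0, by omega⟩ with hi0
    set e1 : Fin d → ℝ := Pi.single i0 1 with he1def
    set E : ℝ := eps d p i0 with hEdef
    have hE0 : E ≠ 0 := eps_ne_zero d p i0
    have hqe1 : qf d p e1 = E := qf_single d p i0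
    set a : Fin d → ℝ := y - z with hadef
    set B' : ℝ := bform d p a e1 with hB'def
    set Q : ℝ → ℝ := fun s => E*s^2 - 2*B'*s + qf d p a with hQdef
    have hQ : ∀ s : ℝ, qf d p (s • e1 - a) = Q s := by
      intro s
      have h1 : s • e1 - a = (-a) + s • e1 := by module
      rw [h1, qf_add_smul, qf_neg, bform_neg_left, hqe1]
      simp only [hQdef]; ring
    -- find s ∈ (0, r/2) with Q s ≠ 0
    have hs3 : ∃ s : ℝ, 0 < s ∧ s < r/2 ∧ Q s ≠ 0 := by
      by_contra hcon
      push_neg at hcon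
      have h1 : Q (r/8) = 0 := hcon (r/8) (by linarith) (by linarith)
      have h2 : Q (r/16) = 0 := hcon (r/16) (by linarith) (by linarith)
      have h3 : Q (r/32) = 0 := hcon (r/32) (by linarith) (by linarith)
      simp only [hQdef] at h1 h2 h3
      have k12 : E*(r/8 + r/16) = 2*B' := by
        have hfac : (r/8 - r/16) * (E*(r/8 + r/16) - 2*B') = 0 := by linear_combination h1 - h2
        rcases mul_eq_zero.1 hfac with h | h
        · exfalso; linarith [h]
        · linarith [h]
      have k13 : E*(r/8 + r/32) = 2*B' := by
        have hfac : (r/8 - r/32) * (E*(r/8 + r/32) - 2*B') = 0 := by linear_combination h1 - h3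
        rcases mul_eq_zero.1 hfac with h | h
        · exfalso; linarith [h]
        · linarith [h]
      have : E * (r/16 - r/32) = 0 := by linarith
      rcases mul_eq_zero.1 this with h | h
      · exact hE0 h
      · linarith
    obtain ⟨s, hs0, hsr, hQs⟩ := hs3
    have he1norm : ‖e1‖ ≤ 1 := by
      rw [pi_norm_le_iff_of_nonneg (by norm_num)]
      intro i
      simp only [he1def, Pi.single_apply]
      split <;> simp
    set z' : Fin d → ℝ := z + s • e1 with hz'def
    have hz' : z' ∈ Metric.ball z r := by
      rw [Metric.mem_ball, dist_eq_norm]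
      have : z' - z = s • e1 := by simp [hz'def]
      rw [this, norm_smul]
      calc ‖s‖ * ‖e1‖ ≤ s * 1 := by
            rw [Real.norm_eq_abs, abs_of_pos hs0]
            exact mul_le_mul_of_nonneg_left he1norm hs0.le
        _ < r := by linarith
    have hyb : y ∈ Metric.ball z r := Metric.ball_subset_ball (by linarith) hy
    have hzb : z ∈ Metric.ball z r := Metric.mem_ball_self hr
    have cb := convex_ball z r
    -- first segment z to z'
    have hseg1 : ∀ u : ℝ, u ∈ Set.Icc (0:ℝ) 1 → z + u • (s • e1) ∈ U := by
      intro u hu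
      apply hball
      have hmem := cb hzb hz' (by linarith [hu.2] : (0:ℝ) ≤ 1 - u) hu.1 (by ring)
      have : (1-u) • z + u • z' = z + u • (s • e1) := by
        simp only [hz'def]; module
      rwa [this] at hmem
    have hq1 : qf d p (s • e1) ≠ 0 := by
      rw [qf_smul, hqe1]
      exact mul_ne_zero (pow_ne_zero 2 hs0.ne') hE0
    have step1 : f z = f z' := by
      have := seg_const d p lam U hψ ρ hiso z (s • e1) hq1 hseg1
      simpa only [hf, ← hz'def] using this
    -- second segment z' to y
    set w2 : Fin d → ℝ := y - z' with hw2def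
    have hq2 : qf d p w2 ≠ 0 := by
      have : w2 = -(s • e1 - a) := by simp only [hw2def, hz'def, hadef]; module
      rw [this, qf_neg, hQ]
      exact hQs
    have hseg2 : ∀ u : ℝ, u ∈ Set.Icc (0:ℝ) 1 → z' + u • w2 ∈ U := by
      intro u hu
      apply hball
      have hmem := cb hz' hyb (by linarith [hu.2] : (0:ℝ) ≤ 1 - u) hu.1 (by ring)
      have : (1-u) • z' + u • y = z' + u • w2 := by
        simp only [hw2def]; module
      rwa [this] at hmem
    have step2 : f z' = f y := by
      have := seg_const d p lam U hψ ρ hiso z' w2 hq2 hseg2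
      have hzw : z' + w2 = y := by simp only [hw2def]; module
      rw [hzw] at this
      exact this
    rw [← step2, ← step1]
  -- connectedness
  obtain ⟨x₀, hx₀⟩ := hUconn.nonempty
  refine ⟨f x₀, ?_⟩
  set V : Set (Fin d → ℝ) := {x | x ∈ U ∧ f x = f x₀} with hV
  set W : Set (Fin d → ℝ) := {x | x ∈ U ∧ f x ≠ f x₀} with hW
  have hVopen : IsOpen V := by
    rw [Metric.isOpen_iff]
    rintro x ⟨hxU, hfx⟩
    obtain ⟨ε, hε, hbU, hconst⟩ := key x hxU
    exact ⟨ε, hε, fun y hy => ⟨hbU hy, (hconst y hy).trans hfx⟩⟩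
  have hWopen : IsOpen W := by
    rw [Metric.isOpen_iff]
    rintro x ⟨hxU, hfx⟩
    obtain ⟨ε, hε, hbU, hconst⟩ := key x hxU
    exact ⟨ε, hε, fun y hy => ⟨hbU hy, by rw [hconst y hy]; exact hfx⟩⟩
  intro x hx
  by_contra hne
  obtain ⟨yy, _, hyV, hyW⟩ := hUconn.isPreconnected V W hVopen hWopen
    (fun u hu => by by_cases h : f u = f x₀; exacts [Or.inl ⟨hu, h⟩, Or.inr ⟨hu, h⟩])
    ⟨x₀, hx₀, hx₀, rfl⟩ ⟨x, hx, hx, hne⟩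
  exact hyW.2 hyV.2
end

section
/- Let d ≥ 3, let U ⊆ ℝ^d be open, let a_1,…,a_d : U → ℝ be smooth, and define R^l_{ijk} = δ_{il}(a_j a_k − ∂_j a_k) − δ_{jl}(a_i a_k − ∂_i a_k) + δ_{kl}(∂_i a_j − ∂_j a_i). Suppose that for all i,j the value R^k_{ijk} is independent of k, i.e. R^k_{ijk} = R^l_{ijl} on U for all i,j,k,l. Then ∂_i a_j = a_i a_j on U for all i ≠ j, and consequently ∂_i a_j = ∂_j a_i on U for all i,j; in particular every weakly stiff connection in dimension d ≥ 3 is incompressible. -/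
/-- In dimension `d ≥ 3`, if the curvature coefficients of a projectively flattened
connection satisfy that `R^k_{ijk}` is independent of `k` (as does any weakly stiff
connection), then `∂_i a_j = a_i a_j` for `i ≠ j`, hence `∂_i a_j = ∂_j a_i` for all
`i, j`; in particular the connection is incompressible. -/
theorem stmt12 (d : ℕ) (hd : 3 ≤ d) (U : Set (Fin d → ℝ)) (hU : IsOpen U)
    (a : Fin d → (Fin d → ℝ) → ℝ) (ha : ∀ i, ContDiffOn ℝ (⊤ : ℕ∞) (a i) U)
    (hhol : ∀ x ∈ U, ∀ i j k l : Fin d, curvR a i j k k x = curvR a i j l l x) :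
    (∀ x ∈ U, ∀ i j : Fin d, i ≠ j → pder (a j) i x = a i x * a j x) ∧
    (∀ x ∈ U, ∀ i j : Fin d, pder (a j) i x = pder (a i) j x) := by
  have key : ∀ x ∈ U, ∀ i j : Fin d, i ≠ j → pder (a j) i x = a i x * a j x := by
    intro x hx i j hij
    -- pick k ∉ {i, j}
    obtain ⟨k, hk⟩ : ∃ k : Fin d, k ∉ ({i, j} : Finset (Fin d)) := by
      by_contra h
      push_neg at h
      have hsub : (Finset.univ : Finset (Fin d)) ⊆ {i, j} := fun k _ => h k
      have := Finset.card_le_card hsub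
      simp only [Finset.card_univ, Fintype.card_fin] at this
      have h2 : ({i, j} : Finset (Fin d)).card ≤ 2 := by
        apply le_trans (Finset.card_insert_le _ _); simp
      omega
    simp only [Finset.mem_insert, Finset.mem_singleton, not_or] at hk
    have hki : k ≠ i := hk.1
    have hkj : k ≠ j := hk.2
    have h := hhol x hx i j j k
    simp only [curvR, if_neg hij, if_neg (Ne.symm hki), if_neg (Ne.symm hkj), if_pos rfl, if_true] at h
    linarith
  refine ⟨key, ?_⟩
  intro x hx i j
  rcases eq_or_ne i j with rfl | hij
  · rfl
  · rw [key x hx i j hij, key x hx j i (Ne.symm hij), mul_comm]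
end

section
/- Let U ⊆ ℝ² be open and let a₁, a₂ : U → ℝ be smooth functions satisfying on U: (1) ∂₁a₂ + ∂₂a₁ = 2 a₁ a₂, (2) ∂₁a₁ = a₁², (3) ∂₂a₂ = a₂². Then ∂₁a₂ = a₁ a₂ and ∂₂a₁ = a₁ a₂ on U; consequently all curvature coefficients R^l_{ijk} = δ_{il}(a_j a_k − ∂_j a_k) − δ_{jl}(a_i a_k − ∂_i a_k) + δ_{kl}(∂_i a_j − ∂_j a_i) vanish on U. In other words, a symmetric projectively flattened connection in dimension 2 whose first-order infinitesimal holonomies are all infinitesimal homotheties is flat. -/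
private lemma pder_contDiffAt {d : ℕ} {f : (Fin d → ℝ) → ℝ} {x} (hf : ContDiffAt ℝ (⊤:ℕ∞) f x)
    (j : Fin d) : ContDiffAt ℝ (⊤:ℕ∞) (pder f j) x := by
  have h1 : ContDiffAt ℝ (⊤:ℕ∞) (fderiv ℝ f) x := hf.fderiv_right (m := (⊤:ℕ∞)) (by simp)
  exact ((ContinuousLinearMap.apply ℝ ℝ (Pi.single j (1:ℝ))).contDiff.contDiffAt.comp x h1 : _)

private lemma pder_comm {d : ℕ} {f : (Fin d → ℝ) → ℝ} {x} (hf : ContDiffAt ℝ (⊤:ℕ∞) f x)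
    (i j : Fin d) : pder (pder f j) i x = pder (pder f i) j x := by
  have hd : DifferentiableAt ℝ (fderiv ℝ f) x :=
    (hf.fderiv_right (m := (⊤:ℕ∞)) (by simp)).differentiableAt (by simp)
  have hsymm : IsSymmSndFDerivAt ℝ f x := hf.isSymmSndFDerivAt (by simp; exact WithTop.coe_le_coe.mpr le_top)
  have key : ∀ v w : Fin d → ℝ, fderiv ℝ (fun y => fderiv ℝ f y v) x w =
      fderiv ℝ (fderiv ℝ f) x w v := by
    intro v w
    rw [fderiv_clm_apply hd (differentiableAt_const v)]
    simp
  show fderiv ℝ (fun y => fderiv ℝ f y _) x _ = fderiv ℝ (fun y => fderiv ℝ f y _) x _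
  rw [key, key]
  exact hsymm _ _

private lemma pder_congr {d : ℕ} {U : Set (Fin d → ℝ)} (hU : IsOpen U) {x} (hx : x ∈ U)
    {g h : (Fin d → ℝ) → ℝ} (he : ∀ y ∈ U, g y = h y) (j : Fin d) :
    pder g j x = pder h j x := by
  have : g =ᶠ[nhds x] h := Filter.eventuallyEq_of_mem (hU.mem_nhds hx) he
  unfold pder
  rw [this.fderiv_eq]

private lemma pder_mul {d : ℕ} {g h : (Fin d → ℝ) → ℝ} {x} (hg : DifferentiableAt ℝ g x)
    (hh : DifferentiableAt ℝ h x) (j : Fin d) :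
    pder (fun y => g y * h y) j x = pder g j x * h x + g x * pder h j x := by
  unfold pder
  rw [fderiv_fun_mul hg hh]
  simp
  ring

private lemma pder_sub {d : ℕ} {g h : (Fin d → ℝ) → ℝ} {x} (hg : DifferentiableAt ℝ g x)
    (hh : DifferentiableAt ℝ h x) (j : Fin d) :
    pder (fun y => g y - h y) j x = pder g j x - pder h j x := by
  unfold pder
  rw [fderiv_fun_sub hg hh]
  simp

private lemma pder_const_mul {d : ℕ} {g : (Fin d → ℝ) → ℝ} {x} (hg : DifferentiableAt ℝ g x)
    (c : ℝ) (j : Fin d) :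
    pder (fun y => c * g y) j x = c * pder g j x := by
  unfold pder
  rw [fderiv_const_mul hg c]
  simp

/-- A symmetric projectively flattened connection in dimension 2 whose first-order
infinitesimal holonomies are all infinitesimal homotheties (equations (1)–(3)) is
flat: `∂₁a₂ = ∂₂a₁ = a₁a₂` and all curvature coefficients vanish. -/
theorem stmt15 (U : Set (Fin 2 → ℝ)) (hU : IsOpen U)
    (a : Fin 2 → (Fin 2 → ℝ) → ℝ) (ha : ∀ i, ContDiffOn ℝ (⊤ : ℕ∞) (a i) U)
    (h1 : ∀ x ∈ U, pder (a 1) 0 x + pder (a 0) 1 x = 2 * a 0 x * a 1 x)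
    (h2 : ∀ x ∈ U, pder (a 0) 0 x = a 0 x ^ 2)
    (h3 : ∀ x ∈ U, pder (a 1) 1 x = a 1 x ^ 2) :
    (∀ x ∈ U, pder (a 1) 0 x = a 0 x * a 1 x ∧ pder (a 0) 1 x = a 0 x * a 1 x) ∧
    (∀ x ∈ U, ∀ i j k l : Fin 2, curvR a i j k l x = 0) := by
  have ca : ∀ (i : Fin 2) {x}, x ∈ U → ContDiffAt ℝ (⊤:ℕ∞) (a i) x := fun i x hx =>
    (ha i).contDiffAt (hU.mem_nhds hx)
  have da : ∀ (i : Fin 2) {x}, x ∈ U → DifferentiableAt ℝ (a i) x := fun i x hx =>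
    (ca i hx).differentiableAt (by simp)
  have cp : ∀ (i j : Fin 2) {x}, x ∈ U → ContDiffAt ℝ (⊤:ℕ∞) (pder (a i) j) x :=
    fun i j x hx => pder_contDiffAt (ca i hx) j
  have dp : ∀ (i j : Fin 2) {x}, x ∈ U → DifferentiableAt ℝ (pder (a i) j) x :=
    fun i j x hx => (cp i j hx).differentiableAt (by simp)
  set F : (Fin 2 → ℝ) → ℝ := fun y => pder (a 1) 0 y - pder (a 0) 1 y with hFdef
  have cF : ∀ {x}, x ∈ U → ContDiffAt ℝ (⊤:ℕ∞) F x := fun {x} hx =>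
    (cp 1 0 hx).sub (cp 0 1 hx)
  have dF : ∀ {x}, x ∈ U → DifferentiableAt ℝ F x := fun {x} hx =>
    (cF hx).differentiableAt (by simp)
  have hFx : ∀ y, F y = pder (a 1) 0 y - pder (a 0) 1 y := fun y => rfl
  have hB0 : ∀ x ∈ U, pder (a 1) 0 x = a 0 x * a 1 x + F x / 2 := by
    intro x hx; have := h1 x hx; rw [hFx]; linarith
  have hA1 : ∀ x ∈ U, pder (a 0) 1 x = a 0 x * a 1 x - F x / 2 := by
    intro x hx; have := h1 x hx; rw [hFx]; linarith
  -- ∂₁∂₀a₀ = 2 a₀ ∂₁ a₀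
  have s1 : ∀ x ∈ U, pder (pder (a 0) 0) 1 x = 2 * a 0 x * pder (a 0) 1 x := by
    intro x hx
    have e1 : pder (pder (a 0) 0) 1 x = pder (fun y => a 0 y * a 0 y) 1 x :=
      pder_congr hU hx (fun y hy => by rw [h2 y hy]; ring) 1
    rw [e1, pder_mul (da 0 hx) (da 0 hx)]
    ring
  -- ∂₀∂₁a₁ = 2 a₁ ∂₀ a₁
  have s2 : ∀ x ∈ U, pder (pder (a 1) 1) 0 x = 2 * a 1 x * pder (a 1) 0 x := by
    intro x hx
    have e1 : pder (pder (a 1) 1) 0 x = pder (fun y => a 1 y * a 1 y) 0 x :=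
      pder_congr hU hx (fun y hy => by rw [h3 y hy]; ring) 0
    rw [e1, pder_mul (da 1 hx) (da 1 hx)]
    ring
  -- ∂₀ F = 3 a₀ F
  have stepA : ∀ x ∈ U, pder F 0 x = 3 * a 0 x * F x := by
    intro x hx
    have hsub : pder F 0 x = pder (pder (a 1) 0) 0 x - pder (pder (a 0) 1) 0 x :=
      pder_sub (dp 1 0 hx) (dp 0 1 hx) 0
    have T2 : pder (pder (a 0) 1) 0 x = 2 * a 0 x * pder (a 0) 1 x := by
      rw [pder_comm (ca 0 hx) 0 1]; exact s1 x hx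
    have T1 : pder (pder (a 1) 0) 0 x
        = 2 * pder (a 0) 0 x * a 1 x + 2 * a 0 x * pder (a 1) 0 x
          - 2 * a 0 x * pder (a 0) 1 x := by
      have e1 : pder (pder (a 1) 0) 0 x
          = pder (fun y => (2 * a 0 y) * a 1 y - pder (a 0) 1 y) 0 x :=
        pder_congr hU hx (fun y hy => by have := h1 y hy; ring_nf; linarith) 0
      rw [e1, pder_sub (((da 0 hx).const_mul 2).fun_mul (da 1 hx)) (dp 0 1 hx),
        pder_mul ((da 0 hx).const_mul 2) (da 1 hx), pder_const_mul (da 0 hx) 2, T2]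
      try ring
    rw [hsub, T1, T2, h2 x hx, hB0 x hx, hA1 x hx]
    try ring
  -- ∂₁ F = 3 a₁ F
  have stepB : ∀ x ∈ U, pder F 1 x = 3 * a 1 x * F x := by
    intro x hx
    have hsub : pder F 1 x = pder (pder (a 1) 0) 1 x - pder (pder (a 0) 1) 1 x :=
      pder_sub (dp 1 0 hx) (dp 0 1 hx) 1
    have T1 : pder (pder (a 1) 0) 1 x = 2 * a 1 x * pder (a 1) 0 x := by
      rw [pder_comm (ca 1 hx) 1 0]; exact s2 x hx
    have T2 : pder (pder (a 0) 1) 1 x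
        = 2 * pder (a 0) 1 x * a 1 x + 2 * a 0 x * pder (a 1) 1 x
          - 2 * a 1 x * pder (a 1) 0 x := by
      have e1 : pder (pder (a 0) 1) 1 x
          = pder (fun y => (2 * a 0 y) * a 1 y - pder (a 1) 0 y) 1 x :=
        pder_congr hU hx (fun y hy => by have := h1 y hy; ring_nf; linarith) 1
      rw [e1, pder_sub (((da 0 hx).const_mul 2).fun_mul (da 1 hx)) (dp 1 0 hx),
        pder_mul ((da 0 hx).const_mul 2) (da 1 hx), pder_const_mul (da 0 hx) 2, T1]
      try ring
    rw [hsub, T1, T2, h3 x hx, hB0 x hx, hA1 x hx]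
    try ring
  -- F = 0
  have hF0 : ∀ x ∈ U, F x = 0 := by
    intro x hx
    have hc : pder (pder F 1) 0 x = pder (pder F 0) 1 x := pder_comm (cF hx) 0 1
    have L : pder (pder F 1) 0 x
        = 3 * pder (a 1) 0 x * F x + 3 * a 1 x * pder F 0 x := by
      have e1 : pder (pder F 1) 0 x = pder (fun y => (3 * a 1 y) * F y) 0 x :=
        pder_congr hU hx (fun y hy => by rw [stepB y hy]) 0
      rw [e1, pder_mul ((da 1 hx).const_mul 3) (dF hx)]
      try rw [pder_const_mul (da 1 hx) 3]
      try ring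
    have R : pder (pder F 0) 1 x
        = 3 * pder (a 0) 1 x * F x + 3 * a 0 x * pder F 1 x := by
      have e1 : pder (pder F 0) 1 x = pder (fun y => (3 * a 0 y) * F y) 1 x :=
        pder_congr hU hx (fun y hy => by rw [stepA y hy]) 1
      rw [e1, pder_mul ((da 0 hx).const_mul 3) (dF hx)]
      try rw [pder_const_mul (da 0 hx) 3]
      try ring
    rw [L, R, stepA x hx, stepB x hx, hB0 x hx, hA1 x hx] at hc
    have hsq : F x ^ 2 = 0 := by linear_combination hc / 3
    exact pow_eq_zero_iff (n := 2) (by norm_num) |>.mp hsq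
  have key : ∀ x ∈ U, ∀ j k : Fin 2, pder (a k) j x = a j x * a k x := by
    intro x hx j k
    fin_cases j <;> fin_cases k
    · show pder (a 0) 0 x = a 0 x * a 0 x
      rw [h2 x hx]; ring
    · show pder (a 1) 0 x = a 0 x * a 1 x
      rw [hB0 x hx, hF0 x hx]; ring
    · show pder (a 0) 1 x = a 1 x * a 0 x
      rw [hA1 x hx, hF0 x hx]; ring
    · show pder (a 1) 1 x = a 1 x * a 1 x
      rw [h3 x hx]; ring
  refine ⟨fun x hx => ⟨key x hx 0 1, key x hx 1 0 |>.trans (by ring)⟩, ?_⟩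
  intro x hx i j k l
  have k1 := key x hx
  simp only [curvR, k1]
  split_ifs <;> ring
end

section
/- Let d ≥ 2 and let B be the open unit ball of ℝ^d for the standard Euclidean norm ‖·‖, with inner product x·y. For every x₀ ∈ B and every v₀ ∈ ℝ^d there exists a C² curve γ : ℝ → ℝ^d such that γ(0) = x₀, γ'(0) = v₀, γ(t) ∈ B for all t ∈ ℝ, and γ''(t) = ( 4 (γ(t)·γ'(t)) / (‖γ(t)‖² − 1) ) · γ'(t) for all t ∈ ℝ. In other words, the canonical model S⁻₋₁(d,0) — the stiff connection on the open unit ball with potential ψ(x) = ‖x‖² − 1 — is geodesically complete. -/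
open scoped RealInnerProductSpace
open Filter Set Topology

private lemma stmt18_core (a b c : ℝ) (ha : 0 < a) (hc : c < 0) :
    ∃ f : ℝ → ℝ, f 0 = 0 ∧
      (∀ t, HasDerivAt f ((a * (f t)^2 + 2*b*(f t) + c)^2 / c^2) t) ∧
      (∀ t, a * (f t)^2 + 2*b*(f t) + c < 0) := by
  have ha' : a ≠ 0 := ne_of_gt ha
  have hc' : c ≠ 0 := ne_of_lt hc
  have hdisc : 0 < b^2 - a*c := by nlinarith [sq_nonneg b]
  set s : ℝ := Real.sqrt (b^2 - a*c) with hs_def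
  have hs2 : s^2 = b^2 - a*c := Real.sq_sqrt hdisc.le
  have hspos : 0 < s := Real.sqrt_pos.2 hdisc
  set α : ℝ := (-b - s)/a with hα_def
  set β : ℝ := (-b + s)/a with hβ_def
  have hαβ : α < β := by
    rw [hα_def, hβ_def, div_lt_div_iff_of_pos_right ha]
    linarith
  have key : ∀ x : ℝ, a*x^2 + 2*b*x + c = a*(x-α)*(x-β) := by
    intro x
    rw [hα_def, hβ_def]
    field_simp
    ring_nf
    nlinarith [hs2]
  have hprod : α * β < 0 := by nlinarith [key 0]
  have hα0 : α < 0 := by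
    rcases lt_or_ge α 0 with h|h
    · exact h
    · exfalso; nlinarith [mul_nonneg h (le_of_lt (lt_of_le_of_lt h hαβ))]
  have h0β : 0 < β := by
    rcases lt_or_ge 0 β with h|h
    · exact h
    · exfalso
      nlinarith [mul_nonneg (neg_nonneg.2 (le_of_lt (lt_of_lt_of_le hαβ h))) (neg_nonneg.2 h)]
  set G : ℝ → ℝ := fun x => (c^2/a^2) * ((2/(β-α)^3) * (Real.log (x-α) - Real.log (β-x))
      + (1/(β-α)^2) * ((β-x)⁻¹ - (x-α)⁻¹)) with hG_def
  have hδ : (0:ℝ) < β - α := sub_pos.2 hαβ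
  have hG : ∀ x ∈ Ioo α β, HasDerivAt G (c^2 / (a*(x-α)*(x-β))^2) x := by
    intro x hx
    have hu : 0 < x - α := sub_pos.2 hx.1
    have hv : 0 < β - x := sub_pos.2 hx.2
    have h1 : HasDerivAt (fun x => Real.log (x - α)) (1/(x-α)) x := by
      simpa using ((hasDerivAt_id x).sub_const α).log hu.ne'
    have h2 : HasDerivAt (fun x => Real.log (β - x)) ((-1)/(β-x)) x := by
      simpa using (HasDerivAt.const_sub β (hasDerivAt_id x)).log hv.ne'
    have h3 : HasDerivAt (fun x => (β - x)⁻¹) (-(-1)/(β-x)^2) x :=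
      (HasDerivAt.const_sub β (hasDerivAt_id x)).inv hv.ne'
    have h4 : HasDerivAt (fun x => (x - α)⁻¹) (-(1)/(x-α)^2) x := by
      exact ((hasDerivAt_id x).sub_const α).inv hu.ne'
    have h5 := (((h1.sub h2).const_mul (2/(β-α)^3)).add ((h3.sub h4).const_mul (1/(β-α)^2))).const_mul (c^2/a^2)
    refine HasDerivAt.congr_deriv h5 ?_
    have hxβ : x - β ≠ 0 := by intro h; nlinarith
    field_simp
    ring
  have hGpos : ∀ x ∈ Ioo α β, 0 < c^2 / (a*(x-α)*(x-β))^2 := by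
    intro x hx
    have hu : 0 < x - α := sub_pos.2 hx.1
    have hv : x - β < 0 := sub_neg.2 hx.2
    have hne : a*(x-α)*(x-β) ≠ 0 := by
      exact ne_of_lt (mul_neg_of_pos_of_neg (mul_pos ha hu) hv)
    have hcsq : (0:ℝ) < c^2 := by positivity
    exact div_pos hcsq (pow_two_pos_of_ne_zero hne)
  have hmono : StrictMonoOn G (Ioo α β) := by
    apply strictMonoOn_of_deriv_pos (convex_Ioo α β)
    · exact fun x hx => (hG x hx).continuousAt.continuousWithinAt
    · intro x hx
      rw [interior_Ioo] at hx
      rw [(hG x hx).deriv]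
      exact hGpos x hx
  have hca : (0:ℝ) < c^2/a^2 := by positivity
  have h2d3 : (0:ℝ) < 2/(β-α)^3 := by positivity
  have h1d2 : (0:ℝ) < 1/(β-α)^2 := by positivity
  have hsub : Tendsto (fun x => x - α) (𝓝[>] α) (𝓝[>] (0:ℝ)) := by
    rw [tendsto_nhdsWithin_iff]
    constructor
    · have h : Tendsto (fun x : ℝ => x - α) (𝓝 α) (𝓝 (α - α)) :=
        (continuous_id.sub continuous_const).tendsto α
      simp only [id_eq, sub_self] at h
      exact h.mono_left nhdsWithin_le_nhds
    · exact eventually_mem_nhdsWithin.mono fun x hx => Set.mem_Ioi.2 (sub_pos.2 hx)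
  have hsub2 : Tendsto (fun x => β - x) (𝓝[<] β) (𝓝[>] (0:ℝ)) := by
    rw [tendsto_nhdsWithin_iff]
    constructor
    · have h : Tendsto (fun x : ℝ => β - x) (𝓝 β) (𝓝 (β - β)) :=
        (continuous_const.sub continuous_id).tendsto β
      simp only [id_eq, sub_self] at h
      exact h.mono_left nhdsWithin_le_nhds
    · exact eventually_mem_nhdsWithin.mono fun x hx => Set.mem_Ioi.2 (sub_pos.2 hx)
  have hRc : ContinuousAt (fun x => (-(2/(β-α)^3))*Real.log (β-x) + (1/(β-α)^2)*(β-x)⁻¹) α := by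
    have h1 : ContinuousAt (fun x:ℝ => β - x) α := by fun_prop
    have h2 : β - α ≠ 0 := hδ.ne'
    exact (continuousAt_const.mul (h1.log h2)).add (continuousAt_const.mul (h1.inv₀ h2))
  have hR2c : ContinuousAt (fun x => (2/(β-α)^3)*Real.log (x-α) + (-(1/(β-α)^2))*(x-α)⁻¹) β := by
    have h1 : ContinuousAt (fun x:ℝ => x - α) β := by fun_prop
    have h2 : β - α ≠ 0 := hδ.ne'
    exact (continuousAt_const.mul (h1.log h2)).add (continuousAt_const.mul (h1.inv₀ h2))
  have T1 : Tendsto G (𝓝[>] α) atBot := by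
    have hg1 : Tendsto (fun x => (2/(β-α)^3) * Real.log (x-α)) (𝓝[>] α) atBot :=
      (tendsto_const_mul_atBot_of_pos h2d3).2 (Real.tendsto_log_nhdsGT_zero.comp hsub)
    have hg2 : Tendsto (fun x => (-(1/(β-α)^2)) * (x-α)⁻¹) (𝓝[>] α) atBot :=
      (tendsto_const_mul_atBot_of_neg (neg_neg_iff_pos.2 h1d2)).2 (tendsto_inv_nhdsGT_zero.comp hsub)
    have hsum := (Filter.Tendsto.atBot_add_atBot hg1 hg2).atBot_add hRc.continuousWithinAt
    have := (tendsto_const_mul_atBot_of_pos (f := fun x =>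
        ((2/(β-α)^3) * Real.log (x-α) + (-(1/(β-α)^2))*(x-α)⁻¹) +
        ((-(2/(β-α)^3))*Real.log (β-x) + (1/(β-α)^2)*(β-x)⁻¹)) hca).2 hsum
    exact this.congr fun x => by rw [hG_def]; ring
  have T2 : Tendsto G (𝓝[<] β) atTop := by
    have hlog2 : Tendsto (fun x => Real.log (β-x)) (𝓝[<] β) atBot :=
      Real.tendsto_log_nhdsGT_zero.comp hsub2
    have hg1 : Tendsto (fun x => (-(2/(β-α)^3)) * Real.log (β-x)) (𝓝[<] β) atTop :=
      (tendsto_const_mul_atTop_of_neg (neg_neg_iff_pos.2 h2d3)).2 hlog2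
    have hg2 : Tendsto (fun x => (1/(β-α)^2) * (β-x)⁻¹) (𝓝[<] β) atTop :=
      (tendsto_const_mul_atTop_of_pos h1d2).2 (tendsto_inv_nhdsGT_zero.comp hsub2)
    have hsum := (Filter.Tendsto.atTop_add_atTop hg1 hg2).atTop_add hR2c.continuousWithinAt
    have := (tendsto_const_mul_atTop_of_pos (f := fun x =>
        ((-(2/(β-α)^3))*Real.log (β-x) + (1/(β-α)^2)*(β-x)⁻¹) +
        ((2/(β-α)^3) * Real.log (x-α) + (-(1/(β-α)^2))*(x-α)⁻¹)) hca).2 hsum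
    exact this.congr fun x => by rw [hG_def]; ring
  have hsurj : ∀ y : ℝ, ∃ x, x ∈ Ioo α β ∧ G x = y := by
    intro y
    obtain ⟨x₁, hx₁y, hx₁⟩ := ((T1.eventually (eventually_lt_atBot y)).and
      (Ioo_mem_nhdsGT hαβ : ∀ᶠ x in 𝓝[>] α, x ∈ Ioo α β)).exists
    obtain ⟨x₂, hx₂y, hx₂⟩ := ((T2.eventually (eventually_gt_atTop y)).and
      (Ioo_mem_nhdsLT hαβ : ∀ᶠ x in 𝓝[<] β, x ∈ Ioo α β)).exists
    have h12 : x₁ ≤ x₂ := by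
      by_contra h
      push_neg at h
      have := hmono.monotoneOn hx₂ hx₁ h.le
      linarith
    have hsub12 : Icc x₁ x₂ ⊆ Ioo α β := fun z hz =>
      ⟨lt_of_lt_of_le hx₁.1 hz.1, lt_of_le_of_lt hz.2 hx₂.2⟩
    have hcont : ContinuousOn G (Icc x₁ x₂) := fun z hz =>
      (hG z (hsub12 hz)).continuousAt.continuousWithinAt
    obtain ⟨x, hx, hGx⟩ := intermediate_value_Icc h12 hcont ⟨hx₁y.le, hx₂y.le⟩
    exact ⟨x, hsub12 hx, hGx⟩
  have h0mem : (0:ℝ) ∈ Ioo α β := ⟨hα0, h0β⟩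
  set f : ℝ → ℝ := fun t => (hsurj (t + G 0)).choose with hf_def
  have hfmem : ∀ t, f t ∈ Ioo α β := fun t => (hsurj (t + G 0)).choose_spec.1
  have hfG : ∀ t, G (f t) = t + G 0 := fun t => (hsurj (t + G 0)).choose_spec.2
  have hinj := hmono.injOn
  have hf0 : f 0 = 0 := hinj (hfmem 0) h0mem (by rw [hfG 0, zero_add])
  have hmonof : Monotone f := by
    intro t₁ t₂ h
    by_contra hlt
    push_neg at hlt
    have := hmono (hfmem t₂) (hfmem t₁) hlt
    rw [hfG, hfG] at this
    linarith
  have hrange : range f = Ioo α β := by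
    apply subset_antisymm
    · rintro _ ⟨t, rfl⟩; exact hfmem t
    · intro x hx
      exact ⟨G x - G 0, hinj (hfmem _) hx (by rw [hfG]; ring)⟩
  have hcontf : ∀ t, ContinuousAt f t := by
    intro t
    apply continuousAt_of_monotoneOn_of_image_mem_nhds
      (fun x _ y _ h => hmonof h) univ_mem
    rw [image_univ, hrange]
    exact isOpen_Ioo.mem_nhds (hfmem t)
  have hf' : ∀ t, HasDerivAt f ((a * (f t)^2 + 2*b*(f t) + c)^2 / c^2) t := by
    intro t
    have hx := hfmem t
    have hpne : a*(f t-α)*(f t-β) ≠ 0 :=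
      ne_of_lt (mul_neg_of_pos_of_neg (mul_pos ha (sub_pos.2 hx.1)) (sub_neg.2 hx.2))
    have hD : HasDerivAt (fun x => G x - G 0) (c^2/(a*(f t-α)*(f t-β))^2) (f t) :=
      (hG _ hx).sub_const _
    have hDne : c^2/(a*(f t-α)*(f t-β))^2 ≠ 0 := by
      have := hGpos _ hx
      exact ne_of_gt this
    have hlinv := HasDerivAt.of_local_left_inverse (hcontf t) hD hDne
      (Filter.Eventually.of_forall fun y => by rw [hfG]; ring)
    have heq : (c^2/(a*(f t-α)*(f t-β))^2)⁻¹ = (a * (f t)^2 + 2*b*(f t) + c)^2 / c^2 := by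
      rw [key (f t)]
      field_simp
    rwa [heq] at hlinv
  have hneg : ∀ t, a * (f t)^2 + 2*b*(f t) + c < 0 := by
    intro t
    rw [key]
    exact mul_neg_of_pos_of_neg (mul_pos ha (sub_pos.2 (hfmem t).1)) (sub_neg.2 (hfmem t).2)
  exact ⟨f, hf0, hf', hneg⟩

/-- The canonical model `S⁻₋₁(d,0)` — the stiff connection on the open unit ball of
Euclidean space with potential `ψ(x) = ‖x‖² − 1`, whose geodesic equation is
`γ'' = (4(γ·γ')/(‖γ‖²−1)) γ'` — is geodesically complete: through every point of the
ball and every initial velocity there is a geodesic defined on all of `ℝ` and staying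
in the ball. -/
theorem stmt18 (d : ℕ) (hd : 2 ≤ d)
    (x₀ : EuclideanSpace ℝ (Fin d)) (hx₀ : ‖x₀‖ < 1)
    (v₀ : EuclideanSpace ℝ (Fin d)) :
    ∃ γ : ℝ → EuclideanSpace ℝ (Fin d),
      ContDiff ℝ 2 γ ∧ γ 0 = x₀ ∧ deriv γ 0 = v₀ ∧ (∀ t : ℝ, ‖γ t‖ < 1) ∧
      ∀ t : ℝ, deriv (deriv γ) t =
        (4 * ⟪γ t, deriv γ t⟫ / (‖γ t‖ ^ 2 - 1)) • deriv γ t := by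
  by_cases hv : v₀ = 0
  · refine ⟨fun _ => x₀, contDiff_const, rfl, ?_, fun _ => hx₀, ?_⟩
    · simp only [deriv_const']; exact hv.symm
    · intro t
      have h : deriv (fun _ : ℝ => x₀) = fun _ : ℝ => (0 : EuclideanSpace ℝ (Fin d)) := by
        funext s; exact deriv_const s x₀
      rw [h]
      simp
  · set a : ℝ := ‖v₀‖^2 with ha_def
    set b : ℝ := ⟪x₀, v₀⟫ with hb_def
    set c : ℝ := ‖x₀‖^2 - 1 with hc_def
    have ha : 0 < a := pow_pos (norm_pos_iff.mpr hv) 2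
    have hc : c < 0 := by
      have h0 : (0:ℝ) ≤ ‖x₀‖ := norm_nonneg _
      rw [hc_def]; nlinarith
    have hc' : c ≠ 0 := ne_of_lt hc
    obtain ⟨f, hf0, hf', hneg⟩ := stmt18_core a b c ha hc
    set p : ℝ → ℝ := fun x => a*x^2 + 2*b*x + c with hp_def
    set q : ℝ → ℝ := fun t => (p (f t))^2 / c^2 with hq_def
    have hfq : ∀ t, HasDerivAt f (q t) t := hf'
    have hfd : Differentiable ℝ f := fun t => (hfq t).differentiableAt
    have hderivf : deriv f = q := funext fun t => (hfq t).deriv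
    -- norm identity
    have hp : ∀ s₁ : ℝ, ‖x₀ + s₁ • v₀‖^2 = p s₁ + 1 := by
      intro s₁
      rw [norm_add_sq_real, real_inner_smul_right, norm_smul]
      simp only [Real.norm_eq_abs, mul_pow, sq_abs]
      rw [hp_def]; ring
    set γ : ℝ → EuclideanSpace ℝ (Fin d) := fun t => x₀ + f t • v₀ with hγ_def
    have hγ' : ∀ t, HasDerivAt γ (q t • v₀) t := fun t =>
      ((hfq t).smul_const v₀).const_add x₀
    have hderivγ : deriv γ = fun t => q t • v₀ := funext fun t => (hγ' t).deriv
    -- derivative of q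
    have hP : ∀ x : ℝ, HasDerivAt (fun x => (p x)^2/c^2) (2*(p x)*(2*a*x+2*b)/c^2) x := by
      intro x
      have h1 : HasDerivAt p (2*a*x+2*b) x := by
        have := (((hasDerivAt_pow 2 x).const_mul a).add
          ((hasDerivAt_id x).const_mul (2*b))).add_const c
        simpa [hp_def] using this.congr_deriv (by ring)
      have h2 := (h1.pow 2).div_const (c^2)
      simpa using h2.congr_deriv (by ring)
    have hq' : ∀ t, HasDerivAt q (2*(p (f t))*(2*a*(f t)+2*b)/c^2 * q t) t := fun t =>
      (hP (f t)).comp t (hfq t)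
    have hγ'' : ∀ t, HasDerivAt (deriv γ) ((2*(p (f t))*(2*a*(f t)+2*b)/c^2 * q t) • v₀) t := by
      intro t
      rw [hderivγ]
      exact (hq' t).smul_const v₀
    -- smoothness
    have hPc : ContDiff ℝ 1 (fun x : ℝ => (p x)^2/c^2) := by
      have : ContDiff ℝ 1 p := by
        rw [hp_def]
        exact ((contDiff_const.mul (contDiff_id.pow 2)).add
          (contDiff_const.mul contDiff_id)).add contDiff_const
      exact (this.pow 2).div_const _
    have hf1 : ContDiff ℝ 1 f := contDiff_one_iff_deriv.2 ⟨hfd, by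
      rw [hderivf, hq_def]
      exact (hPc.comp (contDiff_one_iff_deriv.2 ⟨hfd, by
        rw [hderivf]; exact (hPc.continuous.comp hfd.continuous)⟩)).continuous⟩
    have hf2 : ContDiff ℝ 2 f := by
      rw [show (2 : WithTop ℕ∞) = 1 + 1 from rfl, contDiff_succ_iff_deriv]
      refine ⟨hfd, by simp, ?_⟩
      rw [hderivf, hq_def]
      exact hPc.comp hf1
    have hγ2 : ContDiff ℝ 2 γ := by
      rw [hγ_def]
      exact contDiff_const.add (hf2.smul contDiff_const)
    refine ⟨γ, hγ2, ?_, ?_, ?_, ?_⟩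
    · rw [hγ_def]; simp [hf0]
    · rw [hderivγ]
      have : q 0 = 1 := by
        rw [hq_def]
        simp only [hf0, hp_def]
        field_simp
        ring
      simp [this]
    · intro t
      have h1 := hneg t
      have h2 := hp (f t)
      have h1' : p (f t) < 0 := h1
      have h3 : ‖γ t‖^2 < 1 := by rw [hγ_def]; simp only; rw [h2]; linarith
      nlinarith [norm_nonneg (γ t)]
    · intro t
      rw [(hγ'' t).deriv, hderivγ]
      have hinner : ⟪γ t, q t • v₀⟫ = q t * (b + f t * a) := by
        rw [hγ_def]
        simp only
        rw [real_inner_smul_right, inner_add_left, real_inner_smul_left,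
          real_inner_self_eq_norm_sq]
      have hnorm : ‖γ t‖^2 - 1 = p (f t) := by
        rw [hγ_def]; simp only; rw [hp (f t)]; ring
      rw [hinner, hnorm, smul_smul]
      congr 1
      have hpne : p (f t) ≠ 0 := ne_of_lt (hneg t)
      rw [hq_def]
      simp only
      field_simp
      ring
end

section
/- Let 𝔻 ⊆ ℂ be the open unit disk, let f : ℂ → ℂ be meromorphic on 𝔻 with set of poles P ⊆ 𝔻, and suppose z̄ + f(z) ≠ 0 for every z ∈ 𝔻 ∖ P. Let A : 𝔻 → ℂ be the smooth function with A(z) = −2/(z̄ + f(z)) on 𝔻 ∖ P and A = 0 on P, and write a₁ = Re A, a₂ = Im A. Assume that the associated connection is geodesically complete, i.e. every maximal C² solution γ : I → 𝔻 of γ''(t) = −2 ( a₁(γ(t)) γ₁'(t) + a₂(γ(t)) γ₂'(t) ) · γ'(t) is defined on I = ℝ. Then one of the following holds: (A) f(z) = −1/z for all z ∈ 𝔻 ∖ {0}; or (B) f does not extend to any boundary point, i.e. there exist no z₀ with |z₀| = 1, no ε > 0, and no meromorphic function on 𝔻 ∪ B(z₀,ε) whose restriction to 𝔻 equals f. -/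
open ComplexConjugate
open Metric Filter Topology

/-- If `A` is continuous on the disk and bounded by `M` on `ball w δ ∩ 𝔻` for a boundary
point `w`, a geodesic starting at `(1-δ/2)w` with velocity `w` escapes the disk: contradiction. -/
lemma geodesic_escape {A : ℂ → ℂ} {w : ℂ} (hw : ‖w‖ = 1) {δ M : ℝ}
    (hδ : 0 < δ) (hδ1 : δ ≤ 1) (hM : 0 < M)
    (hAc : ∀ z ∈ Metric.ball (0:ℂ) 1, ContinuousAt A z)
    (hbound : ∀ z ∈ Metric.ball w δ ∩ Metric.ball (0:ℂ) 1, ‖A z‖ ≤ M)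
    (γ : ℝ → ℂ) (hγ : ContDiff ℝ 2 γ) (hγ0 : γ 0 = ((1 - δ/2 : ℝ) : ℂ) * w)
    (hγ'0 : deriv γ 0 = w)
    (hball : ∀ t, γ t ∈ Metric.ball (0:ℂ) 1)
    (hode : ∀ t, deriv (deriv γ) t =
      (-2 * ((A (γ t)).re * (deriv γ t).re + (A (γ t)).im * (deriv γ t).im)) • deriv γ t) :
    False := by
  set c : ℝ → ℝ := fun t =>
    -2 * ((A (γ t)).re * (deriv γ t).re + (A (γ t)).im * (deriv γ t).im) with hc_def
  have hγcont : Continuous γ := hγ.continuous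
  have hγ'cont : Continuous (deriv γ) := hγ.continuous_deriv one_le_two
  have hAγ : Continuous fun t => A (γ t) :=
    continuous_iff_continuousAt.2 fun t => (hAc _ (hball t)).comp hγcont.continuousAt
  have hc : Continuous c := by
    apply continuous_const.mul
    exact ((Complex.continuous_re.comp hAγ).mul (Complex.continuous_re.comp hγ'cont)).add
      ((Complex.continuous_im.comp hAγ).mul (Complex.continuous_im.comp hγ'cont))
  set C : ℝ → ℝ := fun t => ∫ τ in (0:ℝ)..t, c τ with hC_def
  have hC : ∀ t, HasDerivAt C (c t) t := fun t =>
    intervalIntegral.integral_hasDerivAt_right (hc.intervalIntegrable 0 t)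
      (hc.stronglyMeasurableAtFilter _ _) hc.continuousAt
  have hC0 : C 0 = 0 := intervalIntegral.integral_same
  have hCcont : Continuous C := continuous_iff_continuousAt.2 fun t => (hC t).continuousAt
  -- deriv γ has derivative c t • deriv γ t
  have hdd : ∀ t, HasDerivAt (deriv γ) (c t • deriv γ t) t := by
    intro t
    have h2 : Differentiable ℝ (deriv γ) := by
      have h3 : ContDiff ℝ (1+1 : ℕ∞) γ := by
        have : ((1+1 : ℕ∞)) = 2 := by norm_num
        rw [this]; exact hγ
      exact (((contDiff_succ_iff_deriv (n := 1)).mp (by exact_mod_cast h3)).2.2).differentiable (by norm_num)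
    have := (h2 t).hasDerivAt
    rwa [hode t] at this
  -- deriv γ t = exp (C t) • w
  have key : ∀ t, deriv γ t = Real.exp (C t) • w := by
    have hD : ∀ t, HasDerivAt (fun t => Real.exp (-C t) • deriv γ t) 0 t := by
      intro t
      have hE : HasDerivAt (fun t => Real.exp (-C t)) (Real.exp (-C t) * (-c t)) t :=
        ((hC t).neg).exp
      have := hE.smul (hdd t)
      refine this.congr_deriv ?_
      rw [smul_smul]
      module
    have hconst : ∀ t, Real.exp (-C t) • deriv γ t = w := by
      intro t
      have := is_const_of_deriv_eq_zero (fun s => (hD s).differentiableAt)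
        (fun s => (hD s).deriv) t 0
      rw [this, hC0, neg_zero, Real.exp_zero, one_smul, hγ'0]
    intro t
    have := hconst t
    have h' := congrArg (fun x => Real.exp (C t) • x) this
    simp only [smul_smul, ← Real.exp_add] at h'
    rw [add_neg_cancel, Real.exp_zero, one_smul] at h'
    exact h'
  set s : ℝ → ℝ := fun t => ∫ τ in (0:ℝ)..t, Real.exp (C τ) with hs_def
  have hexpc : Continuous fun t => Real.exp (C t) := Real.continuous_exp.comp hCcont
  have hs : ∀ t, HasDerivAt s (Real.exp (C t)) t := fun t =>
    intervalIntegral.integral_hasDerivAt_right (hexpc.intervalIntegrable 0 t)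
      (hexpc.stronglyMeasurableAtFilter _ _) hexpc.continuousAt
  have hs0 : s 0 = 0 := intervalIntegral.integral_same
  -- position formula
  have hpos : ∀ t, γ t = ((1 - δ/2 + s t : ℝ) : ℂ) * w := by
    have hD : ∀ t, HasDerivAt (fun t => γ t - ((1 - δ/2 + s t : ℝ) : ℂ) * w) 0 t := by
      intro t
      have h1 : HasDerivAt γ (deriv γ t) t :=
        ((hγ.differentiable (by norm_num)) t).hasDerivAt
      have h2 : HasDerivAt (fun t => ((1 - δ/2 + s t : ℝ) : ℂ) * w)
          (Real.exp (C t) • w) t := by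
        have h3 : HasDerivAt (fun t => (1 - δ/2 + s t : ℝ)) (Real.exp (C t)) t := by
          simpa using (hs t).const_add (1 - δ/2 : ℝ)
        have h4 := h3.smul_const w
        have heq : (fun t => ((1 - δ/2 + s t : ℝ) : ℂ) * w)
            = fun t => (1 - δ/2 + s t : ℝ) • w := by
          funext u; rw [Complex.real_smul]
        rw [heq]; exact h4
      have := h1.sub h2
      rw [key t] at this
      exact this.congr_deriv (sub_self _)
    intro t
    have := is_const_of_deriv_eq_zero (fun u => (hD u).differentiableAt)
      (fun u => (hD u).deriv) t 0
    have h0 : γ 0 - ((1 - δ/2 + s 0 : ℝ) : ℂ) * w = 0 := by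
      rw [hγ0, hs0]; push_cast; ring
    rw [h0] at this
    exact sub_eq_zero.mp this
  have hwnorm : ‖w‖ = 1 := hw
  -- position stays on the chord, s t < δ/2
  have hsnn : ∀ t, 0 ≤ t → 0 ≤ s t := fun t ht =>
    intervalIntegral.integral_nonneg ht fun τ _ => (Real.exp_pos _).le
  have hslt : ∀ t, 0 ≤ t → s t < δ/2 := by
    intro t ht
    have hb := hball t
    rw [mem_ball, dist_zero_right, hpos t] at hb
    rw [norm_mul, Complex.norm_real, hwnorm, mul_one, Real.norm_eq_abs,
      abs_of_nonneg (by have := hsnn t ht; linarith)] at hb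
    linarith
  have hmem : ∀ t, 0 ≤ t → γ t ∈ ball w δ := by
    intro t ht
    rw [mem_ball, dist_eq_norm, hpos t]
    have heq : ((1 - δ/2 + s t : ℝ) : ℂ) * w - w = ((s t - δ/2 : ℝ) : ℂ) * w := by
      push_cast; ring
    rw [heq, norm_mul, Complex.norm_real, hwnorm, mul_one, Real.norm_eq_abs,
      abs_of_nonpos (by have := hslt t ht; linarith)]
    have := hsnn t ht
    linarith
  -- lower bound on c
  have hcl : ∀ t, 0 ≤ t → -(2*M*Real.exp (C t)) ≤ c t := by
    intro t ht
    have hX : (A (γ t)).re * (deriv γ t).re + (A (γ t)).im * (deriv γ t).im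
        ≤ M * Real.exp (C t) := by
      set a := A (γ t) with ha
      set h := deriv γ t with hh
      have h1 : a.re * h.re + a.im * h.im = ((starRingEnd ℂ) a * h).re := by
        simp [Complex.mul_re]
      have h2 : ((starRingEnd ℂ) a * h).re ≤ ‖(starRingEnd ℂ) a * h‖ :=
        Complex.re_le_norm _
      have h3 : ‖(starRingEnd ℂ) a * h‖ = ‖a‖ * ‖h‖ := by
        rw [norm_mul, Complex.norm_conj]
      have h4 : ‖h‖ = Real.exp (C t) := by
        rw [hh, key t, norm_smul, hwnorm, mul_one, Real.norm_eq_abs,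
          abs_of_pos (Real.exp_pos _)]
      have h5 : ‖a‖ ≤ M := hbound _ ⟨hmem t ht, hball t⟩
      calc a.re * h.re + a.im * h.im ≤ ‖a‖ * ‖h‖ := by
            rw [h1, ← h3]; exact h2
        _ ≤ M * Real.exp (C t) := by
            rw [h4]
            exact mul_le_mul_of_nonneg_right h5 (Real.exp_pos _).le
    have hce : c t = -2 * ((A (γ t)).re * (deriv γ t).re + (A (γ t)).im * (deriv γ t).im) := rfl
    rw [hce]
    linarith [hX]
  -- exp (-C t) ≤ 1 + 2Mt
  have hDle : ∀ t, 0 ≤ t → Real.exp (-C t) ≤ 1 + 2*M*t := by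
    have hg : ∀ t, HasDerivAt (fun t => 1 + 2*M*t - Real.exp (-C t))
        (2*M - Real.exp (-C t) * (-c t)) t := by
      intro t
      have h1 : HasDerivAt (fun t : ℝ => 1 + 2*M*t) (2*M) t := by
        simpa using ((hasDerivAt_id t).const_mul (2*M)).const_add (1:ℝ)
      exact h1.sub ((hC t).neg.exp)
    have hmono : MonotoneOn (fun t => 1 + 2*M*t - Real.exp (-C t)) (Set.Ici 0) := by
      apply monotoneOn_of_deriv_nonneg (convex_Ici 0)
      · exact fun t _ => (hg t).continuousAt.continuousWithinAt
      · intro t ht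
        exact (hg t).differentiableAt.differentiableWithinAt
      · intro t ht
        rw [interior_Ici] at ht
        rw [(hg t).deriv]
        have h2 := hcl t ht.le
        have h3 : Real.exp (-C t) * Real.exp (C t) = 1 := by
          rw [← Real.exp_add]; simp
        nlinarith [Real.exp_pos (-C t), mul_le_mul_of_nonneg_left h2 (Real.exp_pos (-C t)).le]
    intro t ht
    have := hmono Set.self_mem_Ici ht ht
    simp only [mul_zero, add_zero, hC0, neg_zero, Real.exp_zero] at this
    linarith
  -- exp (C t) ≥ (1+2Mt)⁻¹
  have hexplb : ∀ t, 0 ≤ t → (1 + 2*M*t)⁻¹ ≤ Real.exp (C t) := by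
    intro t ht
    have h1 : (0:ℝ) < 1 + 2*M*t := by nlinarith
    have h2 := hDle t ht
    rw [Real.exp_neg] at h2
    have h4 : 1 ≤ (1 + 2*M*t) * Real.exp (C t) := by
      have := mul_le_mul_of_nonneg_right h2 (Real.exp_pos (C t)).le
      rwa [inv_mul_cancel₀ (Real.exp_ne_zero _)] at this
    rw [← one_div, div_le_iff₀ h1]
    linarith [h4, mul_comm (1 + 2*M*t) (Real.exp (C t))]
  -- compare s with log
  set L : ℝ → ℝ := fun t => Real.log (1 + 2*M*t) / (2*M) with hL_def
  have hL : ∀ t, 0 ≤ t → HasDerivAt L ((1 + 2*M*t)⁻¹) t := by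
    intro t ht
    have h1 : (0:ℝ) < 1 + 2*M*t := by nlinarith
    have hinner : HasDerivAt (fun t : ℝ => 1 + 2*M*t) (2*M) t := by
      simpa using ((hasDerivAt_id t).const_mul (2*M)).const_add (1:ℝ)
    have h2 := (Real.hasDerivAt_log h1.ne').comp t hinner
    have h3 := h2.div_const (2*M)
    have heq : (1 + 2*M*t)⁻¹ * (2*M) / (2*M) = (1 + 2*M*t)⁻¹ :=
      mul_div_cancel_right₀ _ (by positivity)
    rwa [heq] at h3
  have hmono2 : MonotoneOn (fun t => s t - L t) (Set.Ici 0) := by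
    apply monotoneOn_of_deriv_nonneg (convex_Ici 0)
    · exact fun t ht => ((hs t).sub (hL t ht)).continuousAt.continuousWithinAt
    · intro t ht
      rw [interior_Ici] at ht
      exact ((hs t).sub (hL t ht.le)).differentiableAt.differentiableWithinAt
    · intro t ht
      rw [interior_Ici] at ht
      rw [show (fun t => s t - L t) = s - L from rfl, ((hs t).sub (hL t ht.le)).deriv]
      have := hexplb t ht.le
      linarith
  set T : ℝ := Real.exp (M*δ) / (2*M) with hT_def
  have hT : 0 ≤ T := by positivity
  have h6 := hmono2 Set.self_mem_Ici hT hT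
  have hL0 : L 0 = 0 := by simp [hL_def]
  have h7 : δ/2 ≤ L T := by
    have h2MT : 2*M*T = Real.exp (M*δ) := by
      rw [hT_def]; field_simp
    have h8 : M*δ ≤ Real.log (1 + 2*M*T) := by
      rw [h2MT]
      calc M*δ = Real.log (Real.exp (M*δ)) := (Real.log_exp _).symm
        _ ≤ Real.log (1 + Real.exp (M*δ)) :=
            Real.log_le_log (Real.exp_pos _) (by linarith)
    rw [hL_def]
    have : δ/2 = (M*δ)/(2*M) := by field_simp
    rw [this]
    exact (div_le_div_iff_of_pos_right (by linarith)).mpr h8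
  have h9 := hslt T hT
  have h6' : s 0 - L 0 ≤ s T - L T := h6
  rw [hs0, hL0] at h6'
  linarith

lemma arc_vanish (f : ℂ → ℂ) (P : Set ℂ)
    (hnv : ∀ z ∈ Metric.ball (0 : ℂ) 1, z ∉ P → conj z + f z ≠ 0)
    (A : ℂ → ℂ) (hAsmooth : ContDiffOn ℝ (⊤ : ℕ∞) A (Metric.ball (0 : ℂ) 1))
    (hA : ∀ z ∈ Metric.ball (0 : ℂ) 1, z ∉ P → A z = -2 / (conj z + f z))
    (hA0 : ∀ z ∈ P, A z = 0)
    (hcomplete : ∀ x₀ ∈ Metric.ball (0 : ℂ) 1, ∀ v₀ : ℂ,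
      ∃ γ : ℝ → ℂ, ContDiff ℝ 2 γ ∧ γ 0 = x₀ ∧ deriv γ 0 = v₀ ∧
        (∀ t : ℝ, γ t ∈ Metric.ball (0 : ℂ) 1) ∧
        ∀ t : ℝ, deriv (deriv γ) t =
          (-2 * ((A (γ t)).re * (deriv γ t).re + (A (γ t)).im * (deriv γ t).im))
            • deriv γ t)
    (g : ℂ → ℂ) (hgf : ∀ z ∈ Metric.ball (0:ℂ) 1, g z = f z)
    (w : ℂ) (hw : ‖w‖ = 1) (hgc : ContinuousAt g w) :
    conj w + g w = 0 := by
  by_contra hne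
  set m := ‖conj w + g w‖ with hm
  have hm0 : 0 < m := by
    rw [hm]
    exact norm_pos_iff.mpr hne
  have hφ : ContinuousAt (fun z => conj z + g z) w :=
    (Complex.continuous_conj.continuousAt).add hgc
  obtain ⟨δ₀, hδ₀, hδ₀p⟩ := Metric.continuousAt_iff.mp hφ (m/2) (by linarith)
  set δ := min δ₀ 1 with hδ_def
  have hδ : 0 < δ := lt_min hδ₀ one_pos
  have hδ1 : δ ≤ 1 := min_le_right _ _
  have hAb : ∀ z ∈ Metric.ball w δ ∩ Metric.ball (0:ℂ) 1, ‖A z‖ ≤ 4/m := by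
    rintro z ⟨hz1, hz2⟩
    by_cases hzP : z ∈ P
    · rw [hA0 z hzP]
      simp only [norm_zero]
      positivity
    · rw [hA z hz2 hzP]
      have hdz : dist z w < δ₀ := lt_of_lt_of_le (mem_ball.mp hz1) (min_le_left _ _)
      have hd := hδ₀p hdz
      rw [dist_eq_norm] at hd
      have hfg : conj z + f z = conj z + g z := by rw [hgf z hz2]
      have hzlow : m/2 ≤ ‖conj z + f z‖ := by
        rw [hfg]
        have htri : m ≤ ‖conj z + g z‖ + ‖(conj z + g z) - (conj w + g w)‖ := by
          rw [hm]
          calc ‖conj w + g w‖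
              = ‖(conj z + g z) - ((conj z + g z) - (conj w + g w))‖ := by
                congr 1; ring
            _ ≤ ‖conj z + g z‖ + ‖(conj z + g z) - (conj w + g w)‖ := norm_sub_le _ _
            _ = ‖conj z + g z‖ + ‖(conj z + g z) - (conj w + g w)‖ := by
                rfl
        have : ‖(conj z + g z) - (conj w + g w)‖ < m/2 := hd
        linarith
      rw [norm_div]
      have habs2 : ‖(-2:ℂ)‖ = 2 := by
        simp
      rw [habs2]
      rw [div_le_div_iff₀ (lt_of_lt_of_le (by linarith) hzlow) (by linarith)]
      nlinarith [hzlow]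
  have hx₀ : ((1 - δ/2 : ℝ) : ℂ) * w ∈ Metric.ball (0:ℂ) 1 := by
    rw [mem_ball, dist_zero_right, norm_mul, Complex.norm_real] at *
    rw [hw, mul_one, Real.norm_eq_abs, abs_of_nonneg (by linarith)]
    linarith
  obtain ⟨γ, hγ, hγ0, hγ'0, hball, hode⟩ := hcomplete _ hx₀ w
  exact geodesic_escape hw hδ hδ1 (by positivity)
    (fun z hz => (hAsmooth.contDiffAt (Metric.isOpen_ball.mem_nhds hz)).continuousAt)
    hAb γ hγ hγ0 hγ'0 hball hode

lemma propagation (f : ℂ → ℂ) (hf : MeromorphicOn f (Metric.ball (0 : ℂ) 1))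
    {p' : ℂ} (hp' : p' ∈ Metric.ball (0:ℂ) 1)
    (hseed : ∀ᶠ x in 𝓝[≠] p', x * f x + 1 = 0) :
    ∀ z ∈ Metric.ball (0:ℂ) 1, ∀ᶠ x in 𝓝[≠] z, x * f x + 1 = 0 := by
  set u := {z : ℂ | ∀ᶠ x in 𝓝[≠] z, x * f x + 1 = 0} with hu_def
  have hopen : IsOpen u := by
    rw [Metric.isOpen_iff]
    intro z hz
    have hz' := hz
    rw [hu_def, Set.mem_setOf_eq, eventually_nhdsWithin_iff, Metric.eventually_nhds_iff] at hz'
    obtain ⟨ρ, hρ, hρp⟩ := hz'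
    refine ⟨ρ, hρ, fun z' hz'' => ?_⟩
    by_cases hzz : z' = z
    · rwa [hzz]
    · rw [hu_def, Set.mem_setOf_eq, eventually_nhdsWithin_iff, Metric.eventually_nhds_iff]
      have hd0 : 0 < dist z' z := dist_pos.mpr hzz
      have hd1 : dist z' z < ρ := mem_ball.mp hz''
      refine ⟨min (dist z' z) (ρ - dist z' z), lt_min hd0 (by linarith), ?_⟩
      intro x hx _
      have hxz : x ≠ z := by
        intro h
        rw [h] at hx
        have := lt_of_lt_of_le hx (min_le_left _ _)
        rw [dist_comm] at this
        exact lt_irrefl _ this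
      have hxρ : dist x z < ρ := by
        calc dist x z ≤ dist x z' + dist z' z := dist_triangle _ _ _
          _ < (ρ - dist z' z) + dist z' z := by
              have := lt_of_lt_of_le hx (min_le_right _ _)
              linarith
          _ = ρ := by ring
      exact hρp hxρ hxz
  have hclosed : closure u ∩ Metric.ball (0:ℂ) 1 ⊆ u := by
    rintro z ⟨hzc, hzb⟩
    by_cases hzu : z ∈ u
    · exact hzu
    have hfreq : ∃ᶠ x in 𝓝[≠] z, x * f x + 1 = 0 := by
      rw [Filter.frequently_iff]
      intro U hU
      rw [mem_nhdsWithin] at hU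
      obtain ⟨V, hV, hzV, hVU⟩ := hU
      obtain ⟨z', hz'V, hz'u⟩ := mem_closure_iff.mp hzc V hV hzV
      have hz'ne : z' ≠ z := fun h => hzu (h ▸ hz'u)
      have hmem : ∀ᶠ x in 𝓝[≠] z', x ∈ V ∩ {z}ᶜ := by
        apply nhdsWithin_le_nhds
        exact (hV.inter isOpen_compl_singleton).mem_nhds ⟨hz'V, hz'ne⟩
      have hz'ev : ∀ᶠ x in 𝓝[≠] z', x * f x + 1 = 0 := hz'u
      obtain ⟨x, hx1, hx2⟩ := (hz'ev.and hmem).exists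
      exact ⟨x, hVU ⟨hx2.1, hx2.2⟩, hx1⟩
    have hmero : MeromorphicAt (fun x : ℂ => x * f x + 1) z := by
      have h1 : MeromorphicAt (fun x : ℂ => x * f x) z := (MeromorphicAt.id z).mul (hf z hzb)
      exact h1.add (MeromorphicAt.const 1 z)
    obtain ⟨n, hn⟩ := hmero
    have hfreq2 : ∃ᶠ x in 𝓝[≠] z, (x - z)^n • (x * f x + 1) = 0 :=
      hfreq.mono fun x hx => by rw [hx, smul_zero]
    have hev := hn.frequently_zero_iff_eventually_zero.mp hfreq2
    have hev' : ∀ᶠ x in 𝓝[≠] z, (x - z)^n • (x * f x + 1) = 0 :=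
      hev.filter_mono nhdsWithin_le_nhds
    show ∀ᶠ x in 𝓝[≠] z, x * f x + 1 = 0
    filter_upwards [hev', self_mem_nhdsWithin] with x hx hxne
    have hpow : (x - z)^n ≠ 0 := pow_ne_zero _ (sub_ne_zero.mpr hxne)
    rw [smul_eq_mul] at hx
    rcases mul_eq_zero.mp hx with h | h
    · exact absurd h hpow
    · exact h
  have := (convex_ball (0:ℂ) 1).isPreconnected.subset_of_closure_inter_subset hopen
    ⟨p', hp', hseed⟩ hclosed
  exact fun z hz => this hz

/-- `e^{ia} ≠ 1` for `0 < a ≤ 1/2`. -/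
lemma expI_ne_one {a : ℝ} (ha : 0 < a) (ha2 : a ≤ 1/2) :
    Complex.exp ((a : ℂ) * Complex.I) ≠ 1 := by
  intro h
  rw [Complex.exp_eq_one_iff] at h
  obtain ⟨n, hn⟩ := h
  have him := congrArg Complex.im hn
  simp [Complex.mul_im, Complex.mul_re] at him
  -- him : a = n * (2 * π) hopefully
  rcases lt_trichotomy n 0 with hn0 | hn0 | hn0
  · have h1' : n ≤ -1 := by omega
    have h1 : (n:ℝ) ≤ -1 := by exact_mod_cast h1'
    nlinarith [Real.pi_pos]
  · subst hn0; simp at him; linarith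
  · have h1 : (1:ℝ) ≤ n := by exact_mod_cast hn0
    nlinarith [Real.pi_gt_three]

/-- Points on the unit circle near each other. -/
lemma arc_dist {z₀ : ℂ} (hz₀ : ‖z₀‖ = 1) {a b : ℝ} (h : |b - a| ≤ 1) :
    dist (z₀ * Complex.exp ((b:ℂ) * Complex.I)) (z₀ * Complex.exp ((a:ℂ) * Complex.I))
      ≤ 2 * |b - a| := by
  have key : z₀ * Complex.exp ((b:ℂ) * Complex.I) - z₀ * Complex.exp ((a:ℂ) * Complex.I)
      = z₀ * Complex.exp ((a:ℂ) * Complex.I) * (Complex.exp (((b-a : ℝ):ℂ) * Complex.I) - 1) := by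
    rw [mul_sub, mul_one]
    congr 1
    rw [mul_assoc, ← Complex.exp_add]
    congr 1
    push_cast
    ring
  rw [dist_eq_norm, key, norm_mul, norm_mul, hz₀, one_mul, Complex.norm_exp]
  have hre : ((a:ℂ) * Complex.I).re = 0 := by simp
  rw [hre, Real.exp_zero, one_mul]
  have h1 : ‖((b-a : ℝ):ℂ) * Complex.I‖ ≤ 1 := by
    rw [norm_mul, Complex.norm_I, mul_one, Complex.norm_real, Real.norm_eq_abs]
    exact h
  have h2 := Complex.norm_exp_sub_one_le h1
  rw [norm_mul, Complex.norm_I, mul_one, Complex.norm_real, Real.norm_eq_abs] at h2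
  exact h2


/-- Dichotomy for geodesically complete weakly stiff connections on the unit disk:
if `f` is meromorphic on `𝔻` with pole set `P`, `z̄ + f(z)` never vanishes, `A` is the
smooth function equal to `−2/(z̄ + f(z))` off `P` and `0` on `P`, and the associated
connection (with geodesic equation `γ'' = −2(Re A(γ)·γ₁' + Im A(γ)·γ₂')γ'`) is
geodesically complete, then either `f(z) = −1/z` on `𝔻∖{0}` or `f` extends
meromorphically to no boundary point of `𝔻`. -/
theorem stmt19 (f : ℂ → ℂ) (hf : MeromorphicOn f (Metric.ball (0 : ℂ) 1))
    (P : Set ℂ) (hP : P ⊆ Metric.ball (0 : ℂ) 1)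
    (hPdef : ∀ z ∈ Metric.ball (0 : ℂ) 1, (z ∈ P ↔ ¬AnalyticAt ℂ f z))
    (hnv : ∀ z ∈ Metric.ball (0 : ℂ) 1, z ∉ P → conj z + f z ≠ 0)
    (A : ℂ → ℂ) (hAsmooth : ContDiffOn ℝ (⊤ : ℕ∞) A (Metric.ball (0 : ℂ) 1))
    (hA : ∀ z ∈ Metric.ball (0 : ℂ) 1, z ∉ P → A z = -2 / (conj z + f z))
    (hA0 : ∀ z ∈ P, A z = 0)
    (hcomplete : ∀ x₀ ∈ Metric.ball (0 : ℂ) 1, ∀ v₀ : ℂ,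
      ∃ γ : ℝ → ℂ, ContDiff ℝ 2 γ ∧ γ 0 = x₀ ∧ deriv γ 0 = v₀ ∧
        (∀ t : ℝ, γ t ∈ Metric.ball (0 : ℂ) 1) ∧
        ∀ t : ℝ, deriv (deriv γ) t =
          (-2 * ((A (γ t)).re * (deriv γ t).re + (A (γ t)).im * (deriv γ t).im))
            • deriv γ t) :
    (∀ z ∈ Metric.ball (0 : ℂ) 1, z ≠ 0 → f z = -1 / z) ∨
    ¬∃ (z₀ : ℂ) (ε : ℝ) (g : ℂ → ℂ), ‖z₀‖ = 1 ∧ 0 < ε ∧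
      MeromorphicOn g (Metric.ball (0 : ℂ) 1 ∪ Metric.ball z₀ ε) ∧
      ∀ z ∈ Metric.ball (0 : ℂ) 1, g z = f z := by
  by_cases hext : ∃ (z₀ : ℂ) (ε : ℝ) (g : ℂ → ℂ), ‖z₀‖ = 1 ∧ 0 < ε ∧
      MeromorphicOn g (Metric.ball (0 : ℂ) 1 ∪ Metric.ball z₀ ε) ∧
      ∀ z ∈ Metric.ball (0 : ℂ) 1, g z = f z
  swap
  · exact Or.inr hext
  left
  obtain ⟨z₀, ε, g, hz₀, hε, hg, hgf⟩ := hext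
  -- Step 1: vanishing at good arc points
  have harc : ∀ w : ℂ, ‖w‖ = 1 → AnalyticAt ℂ g w → w * g w + 1 = 0 := by
    intro w hw hwa
    have h0 := arc_vanish f P hnv A hAsmooth hA hA0 hcomplete g hgf w hw hwa.continuousAt
    have hgw : g w = -conj w := by linear_combination h0
    rw [hgw]
    have hwc : w * conj w = 1 := by
      rw [Complex.mul_conj]
      norm_cast
      rw [Complex.normSq_eq_norm_sq, hw]
      norm_num
    rw [mul_neg, hwc]
    ring
  -- Step 2: seed construction near z₀
  have hz₀U : z₀ ∈ Metric.ball (0:ℂ) 1 ∪ Metric.ball z₀ ε := Or.inr (mem_ball_self hε)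
  have hevan := (hg z₀ hz₀U).eventually_analyticAt
  rw [eventually_nhdsWithin_iff, Metric.eventually_nhds_iff] at hevan
  obtain ⟨r₀, hr₀, hr₀p⟩ := hevan
  set θ := min (r₀/8) (1/2) with hθ_def
  have hθ : 0 < θ := lt_min (by linarith) one_half_pos
  have hθ2 : θ ≤ 1/2 := min_le_right _ _
  have hθr : θ ≤ r₀/8 := min_le_left _ _
  have hz₀0 : z₀ ≠ 0 := by
    intro h'; rw [h'] at hz₀; simp at hz₀
  -- arc points are analytic points of g where the identity holds
  have harcpt : ∀ a : ℝ, 0 < a → a ≤ θ →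
      (z₀ * Complex.exp ((a:ℂ) * Complex.I)) * g (z₀ * Complex.exp ((a:ℂ) * Complex.I)) + 1 = 0
      ∧ AnalyticAt ℂ g (z₀ * Complex.exp ((a:ℂ) * Complex.I)) := by
    intro a ha haθ
    set x := z₀ * Complex.exp ((a:ℂ) * Complex.I) with hx_def
    have hxabs : ‖x‖ = 1 := by
      rw [hx_def, norm_mul, hz₀, Complex.norm_exp, one_mul]
      simp
    have hxz₀ : x ≠ z₀ := by
      intro h
      have h2 : Complex.exp ((a:ℂ) * Complex.I) = 1 :=
        mul_left_cancel₀ hz₀0 (h.trans (mul_one z₀).symm)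
      exact expI_ne_one ha (le_trans haθ hθ2) h2
    have hxd : dist x z₀ < r₀ := by
      have h1 : dist x z₀ ≤ 2 * |a - 0| := by
        have := arc_dist hz₀ (a := 0) (b := a)
          (by rw [sub_zero, abs_of_pos ha]; linarith)
        simpa using this
      rw [sub_zero, abs_of_pos ha] at h1
      linarith
    have hxa : AnalyticAt ℂ g x := hr₀p hxd hxz₀
    exact ⟨harc x hxabs hxa, hxa⟩
  set p := z₀ * Complex.exp ((θ:ℂ) * Complex.I) with hp_def
  have hpa : AnalyticAt ℂ g p := (harcpt θ hθ le_rfl).2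
  have hfreq : ∃ᶠ x in 𝓝[≠] p, x * g x + 1 = 0 := by
    rw [Filter.frequently_iff]
    intro U hU
    rw [mem_nhdsWithin] at hU
    obtain ⟨V, hV, hpV, hVU⟩ := hU
    obtain ⟨ρ, hρ, hρV⟩ := Metric.isOpen_iff.mp hV p hpV
    set β := min (θ/2) (ρ/4) with hβ_def
    have hβ0 : 0 < β := lt_min (by linarith) (by linarith)
    have hβθ : β ≤ θ/2 := min_le_left _ _
    have hβρ : β ≤ ρ/4 := min_le_right _ _
    set a := θ - β with ha_def
    have ha0 : 0 < a := by rw [ha_def]; linarith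
    have haθ : a ≤ θ := by rw [ha_def]; linarith
    set x := z₀ * Complex.exp ((a:ℂ) * Complex.I) with hx_def
    have hxp : dist x p < ρ := by
      have h1 : dist x p ≤ 2 * |a - θ| := arc_dist hz₀ (by rw [ha_def]; rw [abs_of_nonpos (by linarith)]; linarith)
      rw [ha_def] at h1
      have : |θ - β - θ| = β := by rw [abs_of_nonpos (by linarith)]; ring
      rw [this] at h1
      linarith
    have hxne : x ≠ p := by
      intro h
      have h2 : Complex.exp ((θ:ℂ) * Complex.I - (a:ℂ) * Complex.I) = 1 := by
        rw [Complex.exp_sub]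
        rw [hx_def, hp_def] at h
        have h3 : Complex.exp ((a:ℂ) * Complex.I) = Complex.exp ((θ:ℂ) * Complex.I) :=
          mul_left_cancel₀ hz₀0 h
        rw [h3, div_self (Complex.exp_ne_zero _)]
      have h4 : ((θ - a : ℝ):ℂ) * Complex.I = (θ:ℂ) * Complex.I - (a:ℂ) * Complex.I := by
        push_cast; ring
      rw [← h4] at h2
      have h5 : θ - a = β := by rw [ha_def]; ring
      rw [h5] at h2
      exact expI_ne_one hβ0 (by linarith) h2
    exact ⟨x, hVU ⟨hρV hxp, hxne⟩, (harcpt a ha0 haθ).1⟩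
  have hGanal : AnalyticAt ℂ (fun x => x * g x + 1) p :=
    ((analyticAt_id).mul hpa).add analyticAt_const
  have hev := hGanal.frequently_zero_iff_eventually_zero.mp hfreq
  rw [Metric.eventually_nhds_iff] at hev
  obtain ⟨ρ, hρ, hρp⟩ := hev
  set ρ' := min ρ (1/2) with hρ'_def
  have hρ'0 : 0 < ρ' := lt_min hρ one_half_pos
  have hρ'2 : ρ' ≤ 1/2 := min_le_right _ _
  have hρ'ρ : ρ' ≤ ρ := min_le_left _ _
  set p' := ((1 - ρ'/2 : ℝ) : ℂ) * p with hp'_def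
  have hpabs : ‖p‖ = 1 := by
    rw [hp_def, norm_mul, hz₀, Complex.norm_exp, one_mul]
    simp
  have hp'ball : p' ∈ Metric.ball (0:ℂ) 1 := by
    rw [mem_ball, dist_zero_right, hp'_def, norm_mul, Complex.norm_real,
      hpabs, mul_one, Real.norm_eq_abs,
      abs_of_nonneg (by linarith)]
    linarith
  have hp'p : dist p' p < ρ := by
    rw [hp'_def, dist_eq_norm]
    have h1 : ((1 - ρ'/2 : ℝ) : ℂ) * p - p = ((-(ρ'/2) : ℝ) : ℂ) * p := by
      push_cast; ring
    rw [h1, norm_mul, Complex.norm_real, hpabs, mul_one,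
      Real.norm_eq_abs, abs_of_nonpos (by linarith)]
    linarith
  have hseed : ∀ᶠ x in 𝓝[≠] p', x * f x + 1 = 0 := by
    apply Filter.Eventually.filter_mono nhdsWithin_le_nhds
    have hop : IsOpen (Metric.ball p ρ ∩ Metric.ball (0:ℂ) 1) :=
      isOpen_ball.inter isOpen_ball
    have hmem : p' ∈ Metric.ball p ρ ∩ Metric.ball (0:ℂ) 1 := ⟨mem_ball.mpr hp'p, hp'ball⟩
    filter_upwards [hop.mem_nhds hmem] with x hx
    have h1 := hρp (mem_ball.mp hx.1)
    rwa [hgf x hx.2] at h1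
  have hprop := propagation f hf hp'ball hseed
  -- Step 4: pointwise conclusion
  intro z hz hz0
  have hzev := hprop z hz
  rw [eventually_nhdsWithin_iff, Metric.eventually_nhds_iff] at hzev
  obtain ⟨ρ₁, hρ₁, hρ₁p⟩ := hzev
  have hWf : ∀ x : ℂ, dist x z < ρ₁ → x ≠ z → (x ≠ 0 ∧ f x = -x⁻¹) := by
    intro x h1 h2
    have h3 := hρ₁p h1 h2
    have hx0 : x ≠ 0 := by rintro rfl; simp at h3
    refine ⟨hx0, ?_⟩
    have h4 : x * f x = -1 := by linear_combination h3
    field_simp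
    linear_combination h4
  have hanal : ∀ x : ℂ, dist x z < ρ₁ → x ≠ z → x ∈ Metric.ball (0:ℂ) 1 →
      A x = -2 / (conj x - x⁻¹) := by
    intro x h1 h2 hxb
    obtain ⟨hx0, hfx⟩ := hWf x h1 h2
    have hfa : AnalyticAt ℂ f x := by
      have hbase : AnalyticAt ℂ (fun y : ℂ => -(y⁻¹)) x := ((analyticAt_id).inv hx0).neg
      apply hbase.congr
      have hop : IsOpen (Metric.ball z ρ₁ ∩ {z}ᶜ : Set ℂ) :=
        isOpen_ball.inter isOpen_compl_singleton
      filter_upwards [hop.mem_nhds ⟨mem_ball.mpr h1, h2⟩] with y hy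
      exact ((hWf y (mem_ball.mp hy.1) hy.2).2).symm
    have hxP : x ∉ P := fun hPx => (hPdef x hxb).mp hPx hfa
    rw [hA x hxb hxP, hfx, ← sub_eq_add_neg]
  have hd0 : conj z - z⁻¹ ≠ 0 := by
    intro h
    have h1 : conj z = z⁻¹ := sub_eq_zero.mp h
    have h2 : z * conj z = 1 := by rw [h1]; exact mul_inv_cancel₀ hz0
    rw [Complex.mul_conj] at h2
    have h3 : Complex.normSq z = 1 := by exact_mod_cast h2
    rw [Complex.normSq_eq_norm_sq] at h3
    have h4 : ‖z‖ < 1 := by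
      have := mem_ball.mp hz; rwa [dist_zero_right] at this
    nlinarith [norm_nonneg z]
  have hAcont : ContinuousAt A z :=
    (hAsmooth.contDiffAt (isOpen_ball.mem_nhds hz)).continuousAt
  have hBcont : ContinuousAt (fun x : ℂ => -2 / (conj x - x⁻¹)) z := by
    apply ContinuousAt.div continuousAt_const
    · exact (Complex.continuous_conj.continuousAt).sub (continuousAt_id.inv₀ hz0)
    · exact hd0
  have hAeqB : A z = -2 / (conj z - z⁻¹) := by
    have hT1 : Filter.Tendsto A (𝓝[≠] z) (𝓝 (A z)) :=
      hAcont.continuousWithinAt.tendsto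
    have hT2 : Filter.Tendsto (fun x : ℂ => -2/(conj x - x⁻¹)) (𝓝[≠] z)
        (𝓝 (-2/(conj z - z⁻¹))) := hBcont.continuousWithinAt.tendsto
    have hEq : A =ᶠ[𝓝[≠] z] fun x : ℂ => -2/(conj x - x⁻¹) := by
      rw [Filter.EventuallyEq, eventually_nhdsWithin_iff]
      filter_upwards [Metric.ball_mem_nhds z hρ₁, isOpen_ball.mem_nhds hz] with x hx1 hx2 hxne
      exact hanal x (mem_ball.mp hx1) hxne hx2
    exact tendsto_nhds_unique (hT1.congr' hEq) hT2
  by_cases hzP : z ∈ P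
  · exfalso
    rw [hA0 z hzP] at hAeqB
    exact (div_ne_zero (by norm_num) hd0) hAeqB.symm
  · have h5 := hA z hz hzP
    have h6 : (-2 : ℂ)/(conj z + f z) = -2/(conj z - z⁻¹) := h5.symm.trans hAeqB
    have h7 := hnv z hz hzP
    rw [div_eq_div_iff h7 hd0] at h6
    have h8 : conj z + f z = conj z - z⁻¹ :=
      mul_left_cancel₀ (show (-2:ℂ) ≠ 0 by norm_num) h6.symm
    have h9 : f z = -z⁻¹ := by linear_combination h8
    rw [h9, neg_div, one_div]
end
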